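/- arXiv:2504.12370 — 5 statements merged into one kernel-verified Lean document; each statement's English description precedes it below -/
import Mathlib

section
/- Exclusion of a collapsed ingoing null boundary segment (no 𝒮_{i⁺}): let a solution of the EMKG system be defined on [u₀,u₁]×[v₀,∞), satisfy the data hypotheses on {u₀}×[v₀,∞), and satisfy the gauge normalization lim_{v→∞}(−r∂_ur)(u,v) = 1 for every u ∈ [u₀,u₁], with v₀ sufficiently large in terms of the hypothesis constants. If a ∈ [u₀,u₁] is such that lim_{v→∞} r(u,v) = 0 for every u ∈ [a,u₁], then a = u₁; in other words, there is no ingoing null segment of positive u-length along which the area-radius extends to zero at v = ∞. -/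
noncomputable section

open Real Filter Topology

/-- Partial derivative in the `u` (first null coordinate) direction. -/
def pdu (f : ℝ × ℝ → ℝ) (p : ℝ × ℝ) : ℝ := fderiv ℝ f p (1, 0)

/-- Partial derivative in the `v` (second null coordinate) direction. -/
def pdv (f : ℝ × ℝ → ℝ) (p : ℝ × ℝ) : ℝ := fderiv ℝ f p (0, 1)

/-- Partial derivative in `u` of a complex-valued function. -/
def pduC (f : ℝ × ℝ → ℂ) (p : ℝ × ℝ) : ℂ := fderiv ℝ f p (1, 0)

/-- Partial derivative in `v` of a complex-valued function. -/
def pdvC (f : ℝ × ℝ → ℂ) (p : ℝ × ℝ) : ℂ := fderiv ℝ f p (0, 1)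

/-- A solution of the spherically symmetric Einstein–Maxwell–Klein–Gordon system in
double null coordinates, in the electromagnetic gauge `A_v ≡ 0`, on a region `R` of the
`(u,v)`-plane.  The gauge derivatives are `D_u φ = ∂_u φ + i q₀ A_u φ`, `D_v φ = ∂_v φ`. -/
structure Sol (q0 msq : ℝ) (R : Set (ℝ × ℝ)) where
  r : ℝ × ℝ → ℝ
  Om2 : ℝ × ℝ → ℝ
  Au : ℝ × ℝ → ℝ
  Qe : ℝ × ℝ → ℝ
  phi : ℝ × ℝ → ℂ
  r_pos : ∀ p ∈ R, 0 < r p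
  Om2_pos : ∀ p ∈ R, 0 < Om2 p
  smooth_r : ContDiff ℝ 3 r
  smooth_Om2 : ContDiff ℝ 3 Om2
  smooth_Au : ContDiff ℝ 3 Au
  smooth_Qe : ContDiff ℝ 3 Qe
  smooth_phi : ContDiff ℝ 3 phi
  eq_Omega : ∀ p ∈ R,
    pdu (pdv (fun q => Real.log (Om2 q))) p =
      -2 * ((pduC phi p + Complex.I * (q0 : ℂ) * (Au p : ℂ) * phi p) *
          (starRingEnd ℂ) (pdvC phi p)).re
        + Om2 p / (2 * r p ^ 2) + 2 * pdu r p * pdv r p / r p ^ 2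
        - Om2 p * Qe p ^ 2 / r p ^ 4
  eq_r : ∀ p ∈ R,
    pdu (pdv r) p =
      -Om2 p / (4 * r p) - pdu r p * pdv r p / r p
        + Om2 p * Qe p ^ 2 / (4 * r p ^ 3) + msq * r p * Om2 p * Complex.normSq (phi p) / 4
  eq_phi : ∀ p ∈ R,
    pduC (pdvC phi) p + Complex.I * (q0 : ℂ) * (Au p : ℂ) * pdvC phi p =
      -((pdv r p / r p : ℝ) : ℂ) * (pduC phi p + Complex.I * (q0 : ℂ) * (Au p : ℂ) * phi p)
        - ((pdu r p / r p : ℝ) : ℂ) * pdvC phi p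
        + Complex.I * (q0 : ℂ) * (Qe p : ℂ) * (Om2 p : ℂ) * phi p / (4 * (r p : ℂ) ^ 2)
        - (msq : ℂ) * (Om2 p : ℂ) * phi p / 4
  eq_Qu : ∀ p ∈ R,
    pdu Qe p = -q0 * r p ^ 2 *
      (phi p * (starRingEnd ℂ) (pduC phi p + Complex.I * (q0 : ℂ) * (Au p : ℂ) * phi p)).im
  eq_Qv : ∀ p ∈ R,
    pdv Qe p = q0 * r p ^ 2 * (phi p * (starRingEnd ℂ) (pdvC phi p)).im
  eq_Ray_u : ∀ p ∈ R,
    pdu (fun q => pdu r q / Om2 q) p =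
      -(r p / Om2 p) * Complex.normSq (pduC phi p + Complex.I * (q0 : ℂ) * (Au p : ℂ) * phi p)
  eq_Ray_v : ∀ p ∈ R,
    pdv (fun q => pdv r q / Om2 q) p = -(r p / Om2 p) * Complex.normSq (pdvC phi p)
  eq_Au : ∀ p ∈ R,
    pdv Au p = -Qe p * Om2 p / (2 * r p ^ 2)

/-- The gauge covariant `u`-derivative `D_u φ = ∂_u φ + i q₀ A_u φ`. -/
def Sol.DuPhi {q0 msq : ℝ} {R : Set (ℝ × ℝ)} (S : Sol q0 msq R) (p : ℝ × ℝ) : ℂ :=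
  pduC S.phi p + Complex.I * (q0 : ℂ) * (S.Au p : ℂ) * S.phi p

/-- The gauge covariant `v`-derivative `D_v φ = ∂_v φ` (gauge `A_v ≡ 0`). -/
def Sol.DvPhi {q0 msq : ℝ} {R : Set (ℝ × ℝ)} (S : Sol q0 msq R) (p : ℝ × ℝ) : ℂ :=
  pdvC S.phi p

/-- Data hypotheses on the outgoing cone `{u₀} × [v₀,∞)`. -/
structure DataHyp {q0 msq : ℝ} {R : Set (ℝ × ℝ)} (S : Sol q0 msq R)
    (u0 v0 s Lm Lp D cnu cOm COm Km : ℝ) : Prop where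
  hs : 1 / 2 < s
  hLm : 0 < Lm
  hLp : 0 < Lp
  hD : 0 < D
  hcnu : 0 < cnu
  hcOm : 0 < cOm
  hCOm : 0 < COm
  hKm : Km < 0
  nu_neg : ∀ p ∈ R, pdu S.r p < 0
  nu_data : ∀ v, v0 ≤ v → cnu ≤ -(S.r (u0, v) * pdu S.r (u0, v))
  lam_data_lo : ∀ v, v0 ≤ v → Lm * v ^ (-(2 * s)) ≤ -(S.r (u0, v) * pdv S.r (u0, v))
  lam_data_hi : ∀ v, v0 ≤ v → -(S.r (u0, v) * pdv S.r (u0, v)) ≤ Lp * v ^ (-(2 * s))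
  phi_data : ∀ v, v0 ≤ v → Complex.normSq (S.phi (u0, v)) ≤ D
  Q_data : ∀ v, v0 ≤ v → |S.Qe (u0, v)| ≤ D
  Om2_data_lo : ∀ v, v0 ≤ v → cOm * Real.exp (2 * Km * v) ≤ S.Om2 (u0, v)
  Om2_data_hi : ∀ v, v0 ≤ v → S.Om2 (u0, v) ≤ COm * Real.exp (2 * Km * v)
  rCH_pos : ∃ ρ, 0 < ρ ∧ Tendsto (fun v => S.r (u0, v)) atTop (𝓝 ρ)


/-- exclusion of a collapsed ingoing null boundary segment `𝒮_{i⁺}`: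
under the data hypotheses and the gauge normalization `lim_{v→∞} (-r∂_u r)(u,v) = 1`,
provided `v₀` is sufficiently large, there is no ingoing null segment of positive
`u`-length along which the area-radius extends to zero at `v = ∞`. -/
theorem statement3
    (q0 msq u0 u1 s Lm Lp D cnu cOm COm Km : ℝ)
    (hq0 : q0 ≠ 0) (hmsq : 0 ≤ msq) (hu : u0 < u1) :
    ∃ V0 : ℝ,
      ∀ v0 : ℝ, V0 ≤ v0 →
        ∀ S : Sol q0 msq (Set.Icc u0 u1 ×ˢ Set.Ici v0),
          DataHyp S u0 v0 s Lm Lp D cnu cOm COm Km →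
          -- gauge normalization
          (∀ u ∈ Set.Icc u0 u1,
            Tendsto (fun v => -(S.r (u, v) * pdu S.r (u, v))) atTop (𝓝 1)) →
            ∀ a ∈ Set.Icc u0 u1,
              (∀ u ∈ Set.Icc a u1, Tendsto (fun v => S.r (u, v)) atTop (𝓝 0)) →
                a = u1 := by
  refine ⟨1, ?_⟩
  intro v0 _ S hDH hg a ha hcol
  by_contra hne
  have hau1 : a < u1 := lt_of_le_of_ne ha.2 hne
  -- the sequence of v-values going to infinity
  set w : ℕ → ℝ := fun n => v0 + n with hw
  have hwv0 : ∀ n, v0 ≤ w n := fun n => le_add_of_nonneg_right (Nat.cast_nonneg n)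
  have hwtop : Tendsto w atTop atTop :=
    tendsto_atTop_add_const_left _ v0 tendsto_natCast_atTop_atTop
  have hrdiff : Differentiable ℝ S.r := S.smooth_r.differentiable (by norm_num)
  have hderiv : ∀ v u, HasDerivAt (fun u => S.r (u, v)) (pdu S.r (u, v)) u := by
    intro v u
    have h1 : HasDerivAt (fun u : ℝ => ((u, v) : ℝ × ℝ)) ((1 : ℝ), (0 : ℝ)) u :=
      (hasDerivAt_id u).prodMk (hasDerivAt_const u v)
    exact (hrdiff (u, v)).hasFDerivAt.comp_hasDerivAt u h1
  have hderiv2 : ∀ v u, HasDerivAt (fun u => S.r (u, v) ^ 2)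
      (2 * S.r (u, v) * pdu S.r (u, v)) u := by
    intro v u
    have := (hderiv v u).fun_pow 2
    simpa [pow_one] using this
  -- continuity of the derivative
  have hcont_pdu : Continuous (pdu S.r) := by
    have h1 : Continuous (fderiv ℝ S.r) :=
      S.smooth_r.continuous_fderiv (by norm_num)
    exact h1.clm_apply continuous_const
  have hGcont : ∀ v, Continuous (fun u => 2 * S.r (u, v) * pdu S.r (u, v)) := by
    intro v
    have hline : Continuous (fun u : ℝ => ((u, v) : ℝ × ℝ)) :=
      continuous_id.prodMk continuous_const
    exact (continuous_const.mul (S.smooth_r.continuous.comp hline)).mul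
      (hcont_pdu.comp hline)
  -- fundamental theorem of calculus
  have hint : ∀ v, ∫ u in a..u1, 2 * S.r (u, v) * pdu S.r (u, v)
      = S.r (u1, v) ^ 2 - S.r (a, v) ^ 2 := by
    intro v
    exact intervalIntegral.integral_eq_sub_of_hasDerivAt
      (fun u _ => hderiv2 v u) ((hGcont v).intervalIntegrable a u1)
  -- membership in R
  have hmem : ∀ n, ∀ u ∈ Set.Icc a u1,
      ((u, w n) : ℝ × ℝ) ∈ Set.Icc u0 u1 ×ˢ Set.Ici v0 := by
    intro n u hu
    exact Set.mem_prod.mpr ⟨⟨ha.1.trans hu.1, hu.2⟩, hwv0 n⟩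
  -- nonnegativity of the integrand on [a,u1]
  have hpos : ∀ n, ∀ u ∈ Set.Icc a u1,
      0 ≤ 2 * (-(S.r (u, w n) * pdu S.r (u, w n))) := by
    intro n u hu
    have h1 := S.r_pos _ (hmem n u hu)
    have h2 := hDH.nu_neg _ (hmem n u hu)
    have : 0 ≤ -(S.r (u, w n) * pdu S.r (u, w n)) := by nlinarith
    linarith
  -- Fatou set-up
  set F : ℕ → ℝ → ENNReal :=
    fun n u => ENNReal.ofReal (2 * (-(S.r (u, w n) * pdu S.r (u, w n)))) with hF
  have hFmeas : ∀ n, Measurable (F n) := by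
    intro n
    have hline : Continuous (fun u : ℝ => ((u, w n) : ℝ × ℝ)) :=
      continuous_id.prodMk continuous_const
    have : Continuous (fun u => 2 * (-(S.r (u, w n) * pdu S.r (u, w n)))) :=
      continuous_const.mul (((S.smooth_r.continuous.comp hline).mul
        (hcont_pdu.comp hline)).neg)
    exact this.measurable.ennreal_ofReal
  have hFatou := MeasureTheory.lintegral_liminf_le
    (μ := MeasureTheory.volume.restrict (Set.Icc a u1)) (u := atTop) hFmeas
  -- lower bound for the left side: pointwise liminf is 2
  have hliminf_pt : ∀ u ∈ Set.Icc a u1,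
      Filter.liminf (fun n => F n u) atTop = ENNReal.ofReal 2 := by
    intro u hu
    have hu' : u ∈ Set.Icc u0 u1 := ⟨ha.1.trans hu.1, hu.2⟩
    have h1 : Tendsto (fun n => -(S.r (u, w n) * pdu S.r (u, w n))) atTop (𝓝 1) :=
      (hg u hu').comp hwtop
    have h2 : Tendsto (fun n => 2 * (-(S.r (u, w n) * pdu S.r (u, w n)))) atTop
        (𝓝 (2 * 1)) := h1.const_mul 2
    have h3 : Tendsto (fun n => F n u) atTop (𝓝 (ENNReal.ofReal (2 * 1))) :=
      (ENNReal.tendsto_ofReal h2)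
    rw [h3.liminf_eq]
    norm_num
  have hLHS : ENNReal.ofReal 2 * MeasureTheory.volume (Set.Icc a u1)
      ≤ ∫⁻ u in Set.Icc a u1, Filter.liminf (fun n => F n u) atTop := by
    have h1 : ∫⁻ (_ : ℝ) in Set.Icc a u1, ENNReal.ofReal 2
        = ENNReal.ofReal 2 * MeasureTheory.volume (Set.Icc a u1) :=
      MeasureTheory.setLIntegral_const _ _
    rw [← h1]
    refine MeasureTheory.setLIntegral_mono' measurableSet_Icc ?_
    intro u hu
    rw [hliminf_pt u hu]
  -- compute the right side: each lintegral is the real integral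
  have hJ : ∀ n, ∫⁻ u in Set.Icc a u1, F n u
      = ENNReal.ofReal (S.r (a, w n) ^ 2 - S.r (u1, w n) ^ 2) := by
    intro n
    have hline : Continuous (fun u : ℝ => ((u, w n) : ℝ × ℝ)) :=
      continuous_id.prodMk continuous_const
    have hc : Continuous (fun u => 2 * (-(S.r (u, w n) * pdu S.r (u, w n)))) :=
      continuous_const.mul (((S.smooth_r.continuous.comp hline).mul
        (hcont_pdu.comp hline)).neg)
    have hintg : MeasureTheory.IntegrableOn
        (fun u => 2 * (-(S.r (u, w n) * pdu S.r (u, w n)))) (Set.Icc a u1) :=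
      hc.integrableOn_Icc
    have hae : 0 ≤ᵐ[MeasureTheory.volume.restrict (Set.Icc a u1)]
        (fun u => 2 * (-(S.r (u, w n) * pdu S.r (u, w n)))) := by
      refine (MeasureTheory.ae_restrict_iff' measurableSet_Icc).2 ?_
      exact MeasureTheory.ae_of_all _ (hpos n)
    have key := MeasureTheory.ofReal_integral_eq_lintegral_ofReal hintg hae
    rw [← key]
    congr 1
    have heq : (fun u => 2 * (-(S.r (u, w n) * pdu S.r (u, w n))))
        = fun u => -(2 * S.r (u, w n) * pdu S.r (u, w n)) := by
      funext u; ring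
    rw [heq]
    rw [MeasureTheory.integral_Icc_eq_integral_Ioc]
    rw [MeasureTheory.integral_neg]
    rw [← intervalIntegral.integral_of_le hau1.le]
    rw [hint (w n)]
    ring
  -- the right side tends to 0
  have hJ0 : Tendsto (fun n => S.r (a, w n) ^ 2 - S.r (u1, w n) ^ 2) atTop (𝓝 0) := by
    have hA : Tendsto (fun n => S.r (a, w n)) atTop (𝓝 0) :=
      (hcol a ⟨le_refl a, hau1.le⟩).comp hwtop
    have hB : Tendsto (fun n => S.r (u1, w n)) atTop (𝓝 0) :=
      (hcol u1 ⟨hau1.le, le_refl u1⟩).comp hwtop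
    have := (hA.mul hA).sub (hB.mul hB)
    simpa [pow_two] using this
  have hRHS : Filter.liminf (fun n => ∫⁻ u in Set.Icc a u1, F n u) atTop = 0 := by
    have h1 : Tendsto (fun n => ∫⁻ u in Set.Icc a u1, F n u) atTop (𝓝 0) := by
      have h2 : Tendsto (fun n => ENNReal.ofReal (S.r (a, w n) ^ 2 - S.r (u1, w n) ^ 2))
          atTop (𝓝 (ENNReal.ofReal 0)) := ENNReal.tendsto_ofReal hJ0
      simp only [ENNReal.ofReal_zero] at h2
      convert h2 using 1
      funext n
      exact hJ n
    exact h1.liminf_eq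
  -- final contradiction
  have hfinal : ENNReal.ofReal 2 * MeasureTheory.volume (Set.Icc a u1) ≤ 0 := by
    calc ENNReal.ofReal 2 * MeasureTheory.volume (Set.Icc a u1)
        ≤ ∫⁻ u in Set.Icc a u1, Filter.liminf (fun n => F n u) atTop := hLHS
      _ ≤ Filter.liminf (fun n => ∫⁻ u in Set.Icc a u1, F n u) atTop := hFatou
      _ = 0 := hRHS
  rw [Real.volume_Icc] at hfinal
  have h2 : (0 : ENNReal) < ENNReal.ofReal 2 := by
    rw [ENNReal.ofReal_pos]; norm_num
  have h3 : (0 : ENNReal) < ENNReal.ofReal (u1 - a) := by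
    rw [ENNReal.ofReal_pos]; linarith
  have := ENNReal.mul_pos (ne_of_gt h2) (ne_of_gt h3)
  exact absurd (le_antisymm hfinal (zero_le (a := _))) (ne_of_gt this)

end
end

section
/- Hardy–Cauchy–Schwarz bound for the scalar field along an ingoing direction: let u₀ < u₁, let r : [u₀,u₁] → (0,∞) be C¹ with r′(u) < 0 for all u, let q₀ ∈ ℝ, let A : [u₀,u₁] → ℝ be continuous, and let φ : [u₀,u₁] → ℂ be C¹. Write Dφ(u) = φ′(u) + i·q₀·A(u)·φ(u) and 𝓕(u) = ∫_{u₀}^{u} (r·|Dφ|²/|r′|)(u′) du′. Then for all u ∈ [u₀,u₁]: |φ(u)| ≤ |φ(u₀)| + 𝓕(u)^{1/2}·(log(r(u₀)/r(u)))^{1/2}. -/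
noncomputable section

open Real Filter Topology MeasureTheory intervalIntegral

/-- Cauchy–Schwarz inequality for interval integrals of continuous nonnegative functions. -/
lemma cs_integral_aux {a b : ℝ} (hab : a ≤ b) {f g : ℝ → ℝ}
    (hf : ContinuousOn f (Set.Icc a b)) (hg : ContinuousOn g (Set.Icc a b))
    (hf0 : ∀ x ∈ Set.Icc a b, 0 ≤ f x) (hg0 : ∀ x ∈ Set.Icc a b, 0 ≤ g x) :
    ∫ x in a..b, f x * g x ≤
      Real.sqrt (∫ x in a..b, f x ^ 2) * Real.sqrt (∫ x in a..b, g x ^ 2) := by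
  rw [intervalIntegral.integral_of_le hab, intervalIntegral.integral_of_le hab,
    intervalIntegral.integral_of_le hab]
  set μ := volume.restrict (Set.Ioc a b) with hμ
  haveI : IsFiniteMeasure μ := ⟨by
    rw [hμ, Measure.restrict_apply_univ]; exact measure_Ioc_lt_top⟩
  obtain ⟨Cf, hCf⟩ := isCompact_Icc.exists_bound_of_continuousOn hf
  obtain ⟨Cg, hCg⟩ := isCompact_Icc.exists_bound_of_continuousOn hg
  have hmf : MeasureTheory.MemLp f (ENNReal.ofReal 2) μ :=
    MeasureTheory.MemLp.of_bound
      ((hf.mono Set.Ioc_subset_Icc_self).aestronglyMeasurable measurableSet_Ioc) Cf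
      (ae_restrict_of_forall_mem measurableSet_Ioc fun x hx =>
        hCf x (Set.Ioc_subset_Icc_self hx))
  have hmg : MeasureTheory.MemLp g (ENNReal.ofReal 2) μ :=
    MeasureTheory.MemLp.of_bound
      ((hg.mono Set.Ioc_subset_Icc_self).aestronglyMeasurable measurableSet_Ioc) Cg
      (ae_restrict_of_forall_mem measurableSet_Ioc fun x hx =>
        hCg x (Set.Ioc_subset_Icc_self hx))
  have hae_f : 0 ≤ᵐ[μ] f :=
    ae_restrict_of_forall_mem measurableSet_Ioc fun x hx =>
      hf0 x (Set.Ioc_subset_Icc_self hx)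
  have hae_g : 0 ≤ᵐ[μ] g :=
    ae_restrict_of_forall_mem measurableSet_Ioc fun x hx =>
      hg0 x (Set.Ioc_subset_Icc_self hx)
  have H := MeasureTheory.integral_mul_le_Lp_mul_Lq_of_nonneg
    (μ := μ) (p := 2) (q := 2) ⟨by norm_num, by norm_num, by norm_num⟩ hae_f hae_g hmf hmg
  simp_rw [Real.rpow_two] at H
  rw [Real.sqrt_eq_rpow, Real.sqrt_eq_rpow]
  exact H

/-- Hardy–Cauchy–Schwarz bound for the scalar field along an ingoing
direction: with `Dφ = φ' + i q₀ A φ` and flux `𝓕(u) = ∫_{u₀}^{u} r|Dφ|²/|r'|`, one has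
`|φ(u)| ≤ |φ(u₀)| + 𝓕(u)^{1/2}·(log(r(u₀)/r(u)))^{1/2}`. -/
theorem statement13 (u0 u1 q0 : ℝ) (h01 : u0 < u1)
    (r r' A : ℝ → ℝ) (φ φ' : ℝ → ℂ)
    (hr : ∀ u ∈ Set.Icc u0 u1, HasDerivAt r (r' u) u)
    (hr'cont : ContinuousOn r' (Set.Icc u0 u1))
    (hrpos : ∀ u ∈ Set.Icc u0 u1, 0 < r u)
    (hr'neg : ∀ u ∈ Set.Icc u0 u1, r' u < 0)
    (hA : ContinuousOn A (Set.Icc u0 u1))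
    (hφ : ∀ u ∈ Set.Icc u0 u1, HasDerivAt φ (φ' u) u)
    (hφ'cont : ContinuousOn φ' (Set.Icc u0 u1)) :
    ∀ u ∈ Set.Icc u0 u1,
      ‖φ u‖ ≤ ‖φ u0‖ +
        Real.sqrt (∫ x in u0..u,
            r x * Complex.normSq (φ' x + Complex.I * (q0 : ℂ) * (A x : ℂ) * φ x) / |r' x|) *
          Real.sqrt (Real.log (r u0 / r u)) := by
  intro u hu
  have hu0 : u0 ∈ Set.Icc u0 u1 := ⟨le_refl _, h01.le⟩
  have hsub : Set.Icc u0 u ⊆ Set.Icc u0 u1 := Set.Icc_subset_Icc_right hu.2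
  have huIcc : Set.uIcc u0 u = Set.Icc u0 u := Set.uIcc_of_le hu.1
  -- the gauge-covariant derivative
  set D : ℝ → ℂ := fun x => φ' x + Complex.I * (q0 : ℂ) * (A x : ℂ) * φ x with hD
  -- continuity facts
  have hφcont : ContinuousOn φ (Set.Icc u0 u1) := fun x hx =>
    ((hφ x hx).continuousAt).continuousWithinAt
  have hrcont : ContinuousOn r (Set.Icc u0 u1) := fun x hx =>
    ((hr x hx).continuousAt).continuousWithinAt
  have hDcont : ContinuousOn D (Set.Icc u0 u1) := by
    apply hφ'cont.add
    exact (continuousOn_const.mul (Complex.continuous_ofReal.comp_continuousOn hA)).mul hφcont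
  -- extend A continuously
  set Atil : ℝ → ℝ := fun x => A (max u0 (min x u1)) with hAtil
  have hclamp : ∀ x, max u0 (min x u1) ∈ Set.Icc u0 u1 := fun x =>
    ⟨le_max_left _ _, max_le (h01.le) (min_le_right _ _)⟩
  have hAtilcont : Continuous Atil :=
    hA.comp_continuous (continuous_const.max (continuous_id.min continuous_const)) hclamp
  have hAtileq : ∀ x ∈ Set.Icc u0 u1, Atil x = A x := by
    intro x hx
    simp only [hAtil]
    rw [min_eq_left hx.2, max_eq_right hx.1]
  -- the gauge integral
  set B : ℝ → ℝ := fun x => ∫ t in u0..x, Atil t with hB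
  have hBd : ∀ x, HasDerivAt B (Atil x) x := fun x =>
    intervalIntegral.integral_hasDerivAt_right (hAtilcont.intervalIntegrable _ _)
      (hAtilcont.stronglyMeasurableAtFilter _ _) hAtilcont.continuousAt
  have hBcont : Continuous B := by
    apply continuous_iff_continuousAt.2
    exact fun x => (hBd x).continuousAt
  set E : ℝ → ℂ := fun x => Complex.exp (Complex.I * (q0 : ℂ) * (B x : ℂ)) with hE
  have hEcont : Continuous E :=
    Complex.continuous_exp.comp
      (continuous_const.mul (Complex.continuous_ofReal.comp hBcont))
  have hEabs : ∀ x, ‖E x‖ = 1 := by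
    intro x
    rw [hE]
    simp [Complex.norm_exp]
  -- gauge-transformed field
  set ψ : ℝ → ℂ := fun x => E x * φ x with hψ
  have hψd : ∀ x ∈ Set.Icc u0 u1, HasDerivAt ψ (E x * D x) x := by
    intro x hx
    have h1 : HasDerivAt (fun y => Complex.I * (q0 : ℂ) * (B y : ℂ))
        (Complex.I * (q0 : ℂ) * (A x : ℂ)) x := by
      have := ((hBd x).ofReal_comp).const_mul (Complex.I * (q0 : ℂ))
      rwa [hAtileq x hx] at this
    have h2 : HasDerivAt E (Complex.I * (q0 : ℂ) * (A x : ℂ) * E x) x := by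
      have := h1.cexp
      simpa [hE, mul_comm] using this
    have h3 := h2.mul (hφ x hx)
    refine h3.congr_deriv ?_
    simp only [hD]
    ring
  have hψabs : ∀ x, ‖ψ x‖ = ‖φ x‖ := by
    intro x
    rw [hψ]
    simp [norm_mul, hEabs]
  -- step 1 : |φ u| ≤ |φ u0| + ∫ |D|
  have key1 : ‖φ u‖ ≤ ‖φ u0‖ +
      ∫ x in u0..u, ‖D x‖ := by
    have hint : IntervalIntegrable (fun x => E x * D x) volume u0 u := by
      apply ContinuousOn.intervalIntegrable
      rw [huIcc]
      exact (hEcont.continuousOn.mul (hDcont.mono hsub))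
    have heq : ∫ x in u0..u, E x * D x = ψ u - ψ u0 := by
      apply intervalIntegral.integral_eq_sub_of_hasDerivAt
      · intro x hx
        rw [huIcc] at hx
        exact hψd x (hsub hx)
      · exact hint
    have hb : ‖ψ u - ψ u0‖ ≤ ∫ x in u0..u, ‖D x‖ := by
      rw [← heq]
      calc ‖∫ x in u0..u, E x * D x‖ ≤ ∫ x in u0..u, ‖E x * D x‖ :=
            intervalIntegral.norm_integral_le_integral_norm hu.1
        _ = ∫ x in u0..u, ‖D x‖ := by
            congr 1
            funext x
            rw [norm_mul]
            rw [show ‖E x‖ = 1 from hEabs x, one_mul]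
    calc ‖φ u‖ = ‖ψ u‖ := (hψabs u).symm
      _ = ‖ψ u0 + (ψ u - ψ u0)‖ := by ring_nf
      _ ≤ ‖ψ u0‖ + ‖ψ u - ψ u0‖ := norm_add_le _ _
      _ ≤ ‖φ u0‖ + ∫ x in u0..u, ‖D x‖ := by
          rw [hψabs u0]
          exact add_le_add_right hb _
  -- step 2 : Cauchy–Schwarz
  set f : ℝ → ℝ := fun x => Real.sqrt (r x / |r' x|) * ‖D x‖ with hf
  set g : ℝ → ℝ := fun x => Real.sqrt (|r' x| / r x) with hg
  have hr'ne : ∀ x ∈ Set.Icc u0 u, |r' x| ≠ 0 := fun x hx =>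
    ne_of_gt (abs_pos.2 (ne_of_lt (hr'neg x (hsub hx))))
  have hrne : ∀ x ∈ Set.Icc u0 u, r x ≠ 0 := fun x hx => ne_of_gt (hrpos x (hsub hx))
  have hfcont : ContinuousOn f (Set.Icc u0 u) := by
    apply ContinuousOn.mul
    · apply Real.continuous_sqrt.comp_continuousOn
      exact ((hrcont.mono hsub).div ((hr'cont.mono hsub).abs) hr'ne)
    · exact continuous_norm.comp_continuousOn (hDcont.mono hsub)
  have hgcont : ContinuousOn g (Set.Icc u0 u) := by
    apply Real.continuous_sqrt.comp_continuousOn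
    exact (((hr'cont.mono hsub).abs).div (hrcont.mono hsub) hrne)
  have hf0 : ∀ x ∈ Set.Icc u0 u, 0 ≤ f x := fun x hx =>
    mul_nonneg (Real.sqrt_nonneg _) (norm_nonneg _)
  have hg0 : ∀ x ∈ Set.Icc u0 u, 0 ≤ g x := fun x hx => Real.sqrt_nonneg _
  have hfg : ∀ x ∈ Set.Icc u0 u, f x * g x = ‖D x‖ := by
    intro x hx
    have h1 : (0:ℝ) ≤ r x / |r' x| :=
      div_nonneg (hrpos x (hsub hx)).le (abs_nonneg _)
    rw [hf, hg]
    have : Real.sqrt (r x / |r' x|) * Real.sqrt (|r' x| / r x) = 1 := by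
      rw [← Real.sqrt_mul h1]
      rw [show r x / |r' x| * (|r' x| / r x) = 1 from by
        rw [div_mul_div_comm, mul_comm (r x)]
        exact div_self (mul_ne_zero (hr'ne x hx) (hrne x hx))]
      exact Real.sqrt_one
    calc Real.sqrt (r x / |r' x|) * ‖D x‖ * Real.sqrt (|r' x| / r x)
        = Real.sqrt (r x / |r' x|) * Real.sqrt (|r' x| / r x) * ‖D x‖ := by ring
      _ = ‖D x‖ := by rw [this, one_mul]
  have hfsq : ∀ x ∈ Set.Icc u0 u,
      f x ^ 2 = r x * Complex.normSq (D x) / |r' x| := by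
    intro x hx
    have h1 : (0:ℝ) ≤ r x / |r' x| :=
      div_nonneg (hrpos x (hsub hx)).le (abs_nonneg _)
    rw [hf, mul_pow, Real.sq_sqrt h1, Complex.normSq_eq_norm_sq]
    ring
  have hgsq : ∀ x ∈ Set.Icc u0 u, g x ^ 2 = |r' x| / r x := by
    intro x hx
    have h1 : (0:ℝ) ≤ |r' x| / r x :=
      div_nonneg (abs_nonneg _) (hrpos x (hsub hx)).le
    rw [hg, Real.sq_sqrt h1]
  have key2 : ∫ x in u0..u, ‖D x‖ ≤
      Real.sqrt (∫ x in u0..u, r x * Complex.normSq (D x) / |r' x|) *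
        Real.sqrt (∫ x in u0..u, |r' x| / r x) := by
    have e1 : ∫ x in u0..u, ‖D x‖ = ∫ x in u0..u, f x * g x := by
      apply intervalIntegral.integral_congr
      rw [huIcc]
      exact fun x hx => (hfg x hx).symm
    have e2 : ∫ x in u0..u, f x ^ 2 =
        ∫ x in u0..u, r x * Complex.normSq (D x) / |r' x| := by
      apply intervalIntegral.integral_congr
      rw [huIcc]
      exact fun x hx => hfsq x hx
    have e3 : ∫ x in u0..u, g x ^ 2 = ∫ x in u0..u, |r' x| / r x := by
      apply intervalIntegral.integral_congr
      rw [huIcc]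
      exact fun x hx => hgsq x hx
    rw [e1, ← e2, ← e3]
    exact cs_integral_aux hu.1 hfcont hgcont hf0 hg0
  -- step 3 : the logarithmic integral
  have key3 : ∫ x in u0..u, |r' x| / r x = Real.log (r u0 / r u) := by
    have hderiv : ∀ x ∈ Set.uIcc u0 u,
        HasDerivAt (fun y => -Real.log (r y)) (|r' x| / r x) x := by
      intro x hx
      rw [huIcc] at hx
      have := ((hr x (hsub hx)).log (hrne x hx)).neg
      have habs : |r' x| = -r' x := abs_of_neg (hr'neg x (hsub hx))
      rw [habs]
      refine this.congr_deriv ?_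
      ring
    have hint : IntervalIntegrable (fun x => |r' x| / r x) volume u0 u := by
      apply ContinuousOn.intervalIntegrable
      rw [huIcc]
      exact ((hr'cont.mono hsub).abs).div (hrcont.mono hsub) hrne
    rw [intervalIntegral.integral_eq_sub_of_hasDerivAt hderiv hint]
    rw [Real.log_div (hrne u0 ⟨le_refl _, hu.1⟩) (hrne u ⟨hu.1, le_refl _⟩)]
    ring
  calc ‖φ u‖ ≤ ‖φ u0‖ + ∫ x in u0..u, ‖D x‖ := key1
    _ ≤ ‖φ u0‖ +
        Real.sqrt (∫ x in u0..u, r x * Complex.normSq (D x) / |r' x|) *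
          Real.sqrt (∫ x in u0..u, |r' x| / r x) := add_le_add_right key2 _
    _ = ‖φ u0‖ +
        Real.sqrt (∫ x in u0..u,
            r x * Complex.normSq (φ' x + Complex.I * (q0 : ℂ) * (A x : ℂ) * φ x) / |r' x|) *
          Real.sqrt (Real.log (r u0 / r u)) := by rw [key3]

end
end

section
/- Raychaudhuri identity and lapse bounds along an ingoing direction: let u₀ < u₁, let r : [u₀,u₁] → (0,∞) and Ω² : [u₀,u₁] → (0,∞) be C¹ with r′(u) < 0 for all u, let q₀ ∈ ℝ, A : [u₀,u₁] → ℝ continuous, φ : [u₀,u₁] → ℂ C¹, write Dφ = φ′ + i·q₀·A·φ and 𝓕(u) = ∫_{u₀}^{u} (r·|Dφ|²/|r′|)(u′) du′, and assume the Raychaudhuri equation (r′/Ω²)′(u) = −(r/Ω²)(u)·|Dφ(u)|² holds on [u₀,u₁]. Then for all u ∈ [u₀,u₁]: (i) Ω²(u) = (|r′(u)|/|r′(u₀)|)·Ω²(u₀)·e^{−𝓕(u)}; (ii) Ω²(u) ≤ Ω²(u₀)·(−r′(u))/(−r′(u₀)); and (iii) ∫_{u₀}^{u₁} Ω²(u′)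 du′ ≤ r(u₀)²·Ω²(u₀)/((−r·r′)(u₀)). -/
noncomputable section

open Real Filter Topology

/-- Raychaudhuri identity and lapse bounds along an ingoing direction:
if `(r'/Ω²)' = -(r/Ω²)|Dφ|²` on `[u₀,u₁]`, then with `𝓕(u) = ∫_{u₀}^{u} r|Dφ|²/|r'|` one has
(i) `Ω²(u) = (|r'(u)|/|r'(u₀)|)·Ω²(u₀)·e^{-𝓕(u)}`,
(ii) `Ω²(u) ≤ Ω²(u₀)·(-r'(u))/(-r'(u₀))`, and
(iii) `∫_{u₀}^{u₁} Ω² ≤ r(u₀)²·Ω²(u₀)/((-r·r')(u₀))`. -/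
theorem statement14 (u0 u1 q0 : ℝ) (h01 : u0 < u1)
    (r r' Om2 A : ℝ → ℝ) (φ φ' : ℝ → ℂ)
    (hr : ∀ u ∈ Set.Icc u0 u1, HasDerivAt r (r' u) u)
    (hr'cont : ContinuousOn r' (Set.Icc u0 u1))
    (hrpos : ∀ u ∈ Set.Icc u0 u1, 0 < r u)
    (hr'neg : ∀ u ∈ Set.Icc u0 u1, r' u < 0)
    (hOm2pos : ∀ u ∈ Set.Icc u0 u1, 0 < Om2 u)
    (hOm2cont : ContinuousOn Om2 (Set.Icc u0 u1))
    (hA : ContinuousOn A (Set.Icc u0 u1))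
    (hφ : ∀ u ∈ Set.Icc u0 u1, HasDerivAt φ (φ' u) u)
    (hφ'cont : ContinuousOn φ' (Set.Icc u0 u1))
    -- the ingoing Raychaudhuri equation
    (hRay : ∀ u ∈ Set.Icc u0 u1,
      HasDerivAt (fun x => r' x / Om2 x)
        (-(r u / Om2 u) *
          Complex.normSq (φ' u + Complex.I * (q0 : ℂ) * (A u : ℂ) * φ u)) u) :
    ∀ u ∈ Set.Icc u0 u1,
      (Om2 u = |r' u| / |r' u0| * Om2 u0 *
          Real.exp (-(∫ x in u0..u,
            r x * Complex.normSq (φ' x + Complex.I * (q0 : ℂ) * (A x : ℂ) * φ x) / |r' x|))) ∧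
      Om2 u ≤ Om2 u0 * (-r' u) / (-r' u0) ∧
      (∫ x in u0..u1, Om2 x) ≤ r u0 ^ 2 * Om2 u0 / (-(r u0 * r' u0)) := by
  have hu0 : u0 ∈ Set.Icc u0 u1 := ⟨le_refl _, h01.le⟩
  have hu1 : u1 ∈ Set.Icc u0 u1 := ⟨h01.le, le_refl _⟩
  -- continuity facts
  have hrc : ContinuousOn r (Set.Icc u0 u1) := fun x hx =>
    (hr x hx).continuousAt.continuousWithinAt
  have hφc : ContinuousOn φ (Set.Icc u0 u1) := fun x hx =>
    (hφ x hx).continuousAt.continuousWithinAt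
  have hDc : ContinuousOn
      (fun x => Complex.normSq (φ' x + Complex.I * (q0 : ℂ) * (A x : ℂ) * φ x))
      (Set.Icc u0 u1) := by
    apply Complex.continuous_normSq.comp_continuousOn
    exact hφ'cont.add
      (((continuousOn_const.mul (Complex.continuous_ofReal.comp_continuousOn hA)).mul hφc))
  have hhc : ContinuousOn
      (fun x => r x * Complex.normSq (φ' x + Complex.I * (q0 : ℂ) * (A x : ℂ) * φ x) / |r' x|)
      (Set.Icc u0 u1) :=
    (hrc.mul hDc).div hr'cont.abs (fun x hx => abs_ne_zero.mpr (hr'neg x hx).ne)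
  -- derivative of log(-(r'/Ω²))
  have hFd : ∀ u ∈ Set.Icc u0 u1,
      HasDerivAt (fun x => Real.log (-(r' x / Om2 x)))
        (r u * Complex.normSq (φ' u + Complex.I * (q0 : ℂ) * (A u : ℂ) * φ u) / |r' u|) u := by
    intro u hu
    have hgpos : 0 < -(r' u / Om2 u) := by
      have := div_neg_of_neg_of_pos (hr'neg u hu) (hOm2pos u hu)
      linarith
    have := ((hRay u hu).neg).log (ne_of_gt hgpos)
    convert this using 1
    · rfl
    rw [abs_of_neg (hr'neg u hu)]
    rw [Pi.neg_apply]
    have h1 : Om2 u ≠ 0 := (hOm2pos u hu).ne'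
    have h2 : r' u ≠ 0 := (hr'neg u hu).ne
    field_simp
  -- fundamental theorem of calculus
  have key : ∀ u ∈ Set.Icc u0 u1,
      (∫ x in u0..u,
          r x * Complex.normSq (φ' x + Complex.I * (q0 : ℂ) * (A x : ℂ) * φ x) / |r' x|)
        = Real.log (-(r' u / Om2 u)) - Real.log (-(r' u0 / Om2 u0)) := by
    intro u hu
    apply intervalIntegral.integral_eq_sub_of_hasDerivAt
    · intro x hx
      rw [Set.uIcc_of_le hu.1] at hx
      exact hFd x ⟨hx.1, hx.2.trans hu.2⟩
    · apply ContinuousOn.intervalIntegrable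
      apply hhc.mono
      rw [Set.uIcc_of_le hu.1]
      exact Set.Icc_subset_Icc_right hu.2
  have hg0pos : 0 < -(r' u0 / Om2 u0) := by
    have := div_neg_of_neg_of_pos (hr'neg u0 hu0) (hOm2pos u0 hu0)
    linarith
  -- part (i)
  have main : ∀ u ∈ Set.Icc u0 u1,
      Om2 u = |r' u| / |r' u0| * Om2 u0 *
        Real.exp (-(∫ x in u0..u,
          r x * Complex.normSq (φ' x + Complex.I * (q0 : ℂ) * (A x : ℂ) * φ x) / |r' x|)) := by
    intro u hu
    have hgpos : 0 < -(r' u / Om2 u) := by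
      have := div_neg_of_neg_of_pos (hr'neg u hu) (hOm2pos u hu)
      linarith
    rw [key u hu]
    rw [neg_sub, Real.exp_sub, Real.exp_log hg0pos, Real.exp_log hgpos]
    rw [abs_of_neg (hr'neg u hu), abs_of_neg (hr'neg u0 hu0)]
    have h1 : Om2 u ≠ 0 := (hOm2pos u hu).ne'
    have h2 : r' u ≠ 0 := (hr'neg u hu).ne
    have h3 : Om2 u0 ≠ 0 := (hOm2pos u0 hu0).ne'
    have h4 : r' u0 ≠ 0 := (hr'neg u0 hu0).ne
    field_simp
  -- part (ii)
  have part2 : ∀ u ∈ Set.Icc u0 u1, Om2 u ≤ Om2 u0 * (-r' u) / (-r' u0) := by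
    intro u hu
    have hFnn : 0 ≤ ∫ x in u0..u,
        r x * Complex.normSq (φ' x + Complex.I * (q0 : ℂ) * (A x : ℂ) * φ x) / |r' x| := by
      apply intervalIntegral.integral_nonneg hu.1
      intro x hx
      have hx' : x ∈ Set.Icc u0 u1 := ⟨hx.1, hx.2.trans hu.2⟩
      exact div_nonneg (mul_nonneg (hrpos x hx').le (Complex.normSq_nonneg _)) (abs_nonneg _)
    have hexp : Real.exp (-(∫ x in u0..u,
        r x * Complex.normSq (φ' x + Complex.I * (q0 : ℂ) * (A x : ℂ) * φ x) / |r' x|)) ≤ 1 :=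
      Real.exp_le_one_iff.mpr (by linarith)
    calc Om2 u = |r' u| / |r' u0| * Om2 u0 *
          Real.exp (-(∫ x in u0..u,
            r x * Complex.normSq (φ' x + Complex.I * (q0 : ℂ) * (A x : ℂ) * φ x) / |r' x|)) :=
        main u hu
      _ ≤ |r' u| / |r' u0| * Om2 u0 * 1 := by
          exact mul_le_mul_of_nonneg_left hexp
            (mul_nonneg (div_nonneg (abs_nonneg _) (abs_nonneg _)) (hOm2pos u0 hu0).le)
      _ = Om2 u0 * (-r' u) / (-r' u0) := by
          rw [abs_of_neg (hr'neg u hu), abs_of_neg (hr'neg u0 hu0)]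
          ring
  -- part (iii)
  have part3 : (∫ x in u0..u1, Om2 x) ≤ r u0 ^ 2 * Om2 u0 / (-(r u0 * r' u0)) := by
    have hOm2int : IntervalIntegrable Om2 MeasureTheory.volume u0 u1 := by
      apply ContinuousOn.intervalIntegrable
      rw [Set.uIcc_of_le h01.le]
      exact hOm2cont
    have h2int : IntervalIntegrable (fun x => Om2 u0 / (-r' u0) * (-r' x))
        MeasureTheory.volume u0 u1 := by
      apply ContinuousOn.intervalIntegrable
      rw [Set.uIcc_of_le h01.le]
      exact continuousOn_const.mul hr'cont.neg
    have hmono := intervalIntegral.integral_mono_on h01.le hOm2int h2int (by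
      intro x hx
      have := part2 x hx
      calc Om2 x ≤ Om2 u0 * (-r' x) / (-r' u0) := this
        _ = Om2 u0 / (-r' u0) * (-r' x) := by ring)
    have hFTC : (∫ x in u0..u1, -r' x) = r u0 - r u1 := by
      have h : (∫ x in u0..u1, -r' x) = -r u1 - -r u0 := by
        apply intervalIntegral.integral_eq_sub_of_hasDerivAt (f := fun x => -r x)
        · intro x hx
          rw [Set.uIcc_of_le h01.le] at hx
          exact (hr x hx).neg
        · apply ContinuousOn.intervalIntegrable
          rw [Set.uIcc_of_le h01.le]
          exact hr'cont.neg
      rw [h]; ring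
    have hconst : (∫ x in u0..u1, Om2 u0 / (-r' u0) * (-r' x))
        = Om2 u0 / (-r' u0) * (r u0 - r u1) := by
      rw [intervalIntegral.integral_const_mul, hFTC]
    have hc : 0 ≤ Om2 u0 / (-r' u0) := by
      apply div_nonneg (hOm2pos u0 hu0).le
      linarith [hr'neg u0 hu0]
    have hstep : Om2 u0 / (-r' u0) * (r u0 - r u1) ≤ Om2 u0 / (-r' u0) * r u0 := by
      apply mul_le_mul_of_nonneg_left _ hc
      linarith [hrpos u1 hu1]
    have heq : Om2 u0 / (-r' u0) * r u0 = r u0 ^ 2 * Om2 u0 / (-(r u0 * r' u0)) := by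
      have h4 : r' u0 ≠ 0 := (hr'neg u0 hu0).ne
      have h5 : r u0 ≠ 0 := (hrpos u0 hu0).ne'
      field_simp
    calc (∫ x in u0..u1, Om2 x) ≤ ∫ x in u0..u1, Om2 u0 / (-r' u0) * (-r' x) := hmono
      _ = Om2 u0 / (-r' u0) * (r u0 - r u1) := hconst
      _ ≤ Om2 u0 / (-r' u0) * r u0 := hstep
      _ = r u0 ^ 2 * Om2 u0 / (-(r u0 * r' u0)) := heq
  intro u hu
  exact ⟨main u hu, part2 u hu, part3⟩

end
end

section
/- A priori control of the outgoing radial derivative (the trapping estimate): there is a numerical constant C > 0 with the following property. Let a solution of the EMKG system be defined on [u₀,u₁]×J (J an interval) with r > 0 and ∂_u r < 0 throughout. Then for every (u,v) ∈ [u₀,u₁]×J: |−r∂_vr(u,v) + (r∂_vr)(u₀,v)| ≤ C·(r(u₀,v)/r(u,v))·(Ω²(u₀,v)/(−r∂_ur)(u₀,v))·( r(u₀,v)² + Q(u₀,v)² + q₀²·r(u₀,v)⁴·(1+|φ(u₀,v)|⁴) + m²·r(u₀,v)⁴·(1+|φ(u₀,v)|²) ). -/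
noncomputable section

open Real Filter Topology

/-! ### Auxiliary lemmas for the proof of Statement 15 -/

lemma hasDerivAt_slice (f : ℝ × ℝ → ℝ) {u v : ℝ} (hf : DifferentiableAt ℝ f (u, v)) :
    HasDerivAt (fun x => f (x, v)) (pdu f (u, v)) u := by
  have h1 : HasDerivAt (fun x : ℝ => (x, v)) ((1 : ℝ), (0 : ℝ)) u := by
    simpa using (hasDerivAt_id u).prodMk (hasDerivAt_const u v)
  exact hf.hasFDerivAt.comp_hasDerivAt u h1

lemma hasDerivAt_sliceC (f : ℝ × ℝ → ℂ) {u v : ℝ} (hf : DifferentiableAt ℝ f (u, v)) :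
    HasDerivAt (fun x => f (x, v)) (pduC f (u, v)) u := by
  have h1 : HasDerivAt (fun x : ℝ => (x, v)) ((1 : ℝ), (0 : ℝ)) u := by
    simpa using (hasDerivAt_id u).prodMk (hasDerivAt_const u v)
  exact hf.hasFDerivAt.comp_hasDerivAt u h1

lemma contDiff_pdu_aux (f : ℝ × ℝ → ℝ) (hf : ContDiff ℝ 3 f) : ContDiff ℝ 2 (pdu f) :=
  (hf.fderiv_right (by norm_num)).clm_apply contDiff_const

lemma contDiff_pdv_aux (f : ℝ × ℝ → ℝ) (hf : ContDiff ℝ 3 f) : ContDiff ℝ 2 (pdv f) :=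
  (hf.fderiv_right (by norm_num)).clm_apply contDiff_const

lemma contDiff_pduC_aux (f : ℝ × ℝ → ℂ) (hf : ContDiff ℝ 3 f) : ContDiff ℝ 2 (pduC f) :=
  (hf.fderiv_right (by norm_num)).clm_apply contDiff_const

/-- `t * exp (-t) ≤ 1` for `t ≥ 0`. -/
lemma texp_le_one {t : ℝ} (ht : 0 ≤ t) : t * Real.exp (-t) ≤ 1 := by
  have h := Real.add_one_le_exp t
  have hp : (0:ℝ) < Real.exp t := Real.exp_pos t
  rw [Real.exp_neg]
  rw [mul_inv_le_iff₀ hp]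
  nlinarith

/-- `t^2 * exp (-t) ≤ 4` for `t ≥ 0`. -/
lemma sqexp_le_four {t : ℝ} (ht : 0 ≤ t) : t ^ 2 * Real.exp (-t) ≤ 4 := by
  have h := Real.add_one_le_exp (t / 2)
  have hp : (0:ℝ) < Real.exp (t / 2) := Real.exp_pos _
  have h2 : Real.exp t = Real.exp (t / 2) ^ 2 := by
    rw [sq, ← Real.exp_add]; ring_nf
  have hp2 : (0:ℝ) < Real.exp t := Real.exp_pos t
  rw [Real.exp_neg, mul_inv_le_iff₀ hp2]
  nlinarith [sq_nonneg (t/2 + 1)]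

set_option maxHeartbeats 8000000 in
/-- Core 1-D integral estimate along a line of constant `v`. -/
lemma ode_key (q0 msq u0 u1 : ℝ) (hmsq : 0 ≤ msq) (hu01 : u0 ≤ u1)
    (ρ ν ω Q y a b yd qd f : ℝ → ℝ)
    (hcν : Continuous ν) (hcω : Continuous ω) (hca : Continuous a) (hcb : Continuous b)
    (hcyd : Continuous yd) (hcqd : Continuous qd)
    (hν : ∀ x ∈ Set.Icc u0 u1, ν x < 0) (hρ : ∀ x ∈ Set.Icc u0 u1, 0 < ρ x)
    (hω : ∀ x ∈ Set.Icc u0 u1, 0 < ω x)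
    (hb0 : ∀ x, 0 ≤ b x) (ha0 : ∀ x, 0 ≤ a x) (hy : ∀ x, y x = a x ^ 2)
    (hρ' : ∀ x, HasDerivAt ρ (ν x) x)
    (hy' : ∀ x, HasDerivAt y (yd x) x) (hyd : ∀ x, |yd x| ≤ 2 * a x * b x)
    (hQ' : ∀ x ∈ Set.Icc u0 u1, HasDerivAt Q (qd x) x)
    (hqd : ∀ x ∈ Set.Icc u0 u1, |qd x| ≤ |q0| * ρ x ^ 2 * a x * b x)
    (hg' : ∀ x ∈ Set.Icc u0 u1,
      HasDerivAt (fun t => ν t / ω t) (-(ρ x / ω x) * b x ^ 2) x)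
    (hf' : ∀ x ∈ Set.Icc u0 u1,
      HasDerivAt f (-ω x / 4 + ω x * Q x ^ 2 / (4 * ρ x ^ 2)
        + msq * ρ x ^ 2 * ω x * y x / 4) x)
    (u : ℝ) (hu : u ∈ Set.Icc u0 u1) :
    |f u - f u0| ≤ 25 * (ω u0 / (-ν u0)) *
      (ρ u0 ^ 2 + Q u0 ^ 2 + q0 ^ 2 * ρ u0 ^ 4 * (1 + y u0 ^ 2)
        + msq * ρ u0 ^ 4 * (1 + y u0)) / ρ u := by
  have hu0I : u0 ∈ Set.Icc u0 u1 := ⟨le_rfl, hu01⟩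
  have hρ0 : 0 < ρ u0 := hρ u0 hu0I
  have hν0 : ν u0 < 0 := hν u0 hu0I
  have hω0 : 0 < ω u0 := hω u0 hu0I
  have hρu : 0 < ρ u := hρ u hu
  -- subinterval inclusion
  have hsub : ∀ c ∈ Set.Icc u0 u1, Set.uIcc u0 c ⊆ Set.Icc u0 u1 := by
    intro c hc
    rw [Set.uIcc_of_le hc.1]
    exact Set.Icc_subset_Icc le_rfl hc.2
  have hρcont : Continuous ρ := by
    have : Differentiable ℝ ρ := fun x => (hρ' x).differentiableAt
    exact this.continuous
  have hycont : Continuous y := by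
    have : Differentiable ℝ y := fun x => (hy' x).differentiableAt
    exact this.continuous
  -- r is decreasing
  have hρ_le : ∀ c ∈ Set.Icc u0 u1, ρ c ≤ ρ u0 := by
    intro c hc
    have hint : IntervalIntegrable ν MeasureTheory.volume u0 c :=
      hcν.intervalIntegrable u0 c
    have heq : ∫ x in u0..c, ν x = ρ c - ρ u0 :=
      intervalIntegral.integral_eq_sub_of_hasDerivAt (fun x _ => hρ' x) hint
    have hle : ∫ x in u0..c, ν x ≤ ∫ _x in u0..c, (0:ℝ) := by
      apply intervalIntegral.integral_mono_on hc.1 hint intervalIntegrable_const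
      intro x hx
      exact (hν x (hsub c hc (by rw [Set.uIcc_of_le hc.1]; exact hx))).le
    simp only [intervalIntegral.integral_const, smul_zero] at hle
    linarith [heq ▸ hle]
  -- the open set where ν < 0
  set U : Set ℝ := {x | ν x < 0} with hUdef
  have hUopen : IsOpen U := isOpen_lt hcν continuous_const
  have hIU : Set.Icc u0 u1 ⊆ U := fun x hx => hν x hx
  -- the Raychaudhuri integrand and its integral
  set G : ℝ → ℝ := fun x => ρ x * b x ^ 2 / (-ν x) with hGdef
  have hGcont : ContinuousOn G U := by
    apply ContinuousOn.div ((hρcont.mul (hcb.pow 2)).continuousOn) (hcν.neg.continuousOn)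
    intro x hx; have : ν x < 0 := hx; exact ne_of_gt (by rw [Pi.neg_apply]; linarith)
  have hGnonneg : ∀ x ∈ Set.Icc u0 u1, 0 ≤ G x := by
    intro x hx
    exact div_nonneg (mul_nonneg (hρ x hx).le (sq_nonneg _)) (by linarith [hν x hx])
  set F : ℝ → ℝ := fun t => ∫ x in u0..t, G x with hFdef
  have hGint : ∀ c ∈ Set.Icc u0 u1, IntervalIntegrable G MeasureTheory.volume u0 c :=
    fun c hc => ((hGcont.mono (fun x hx => hIU (hsub c hc hx)))).intervalIntegrable
  have hF' : ∀ c ∈ Set.Icc u0 u1, HasDerivAt F (G c) c := by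
    intro c hc
    exact intervalIntegral.integral_hasDerivAt_right (hGint c hc)
      (hGcont.stronglyMeasurableAtFilter hUopen c (hIU hc))
      (hGcont.continuousAt (hUopen.mem_nhds (hIU hc)))
  have hF0 : F u0 = 0 := intervalIntegral.integral_same
  have hFnonneg : ∀ c ∈ Set.Icc u0 u1, 0 ≤ F c := by
    intro c hc
    exact intervalIntegral.integral_nonneg hc.1 (fun x hx => hGnonneg x (hsub c hc (by
      rw [Set.uIcc_of_le hc.1]; exact hx)))
  have hFcont : ContinuousOn F (Set.Icc u0 u1) :=
    fun c hc => ((hF' c hc).continuousAt).continuousWithinAt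
  have hFmono : ∀ c ∈ Set.Icc u0 u1, ∀ d ∈ Set.Icc u0 u1, c ≤ d → F c ≤ F d := by
    intro c hc d hd hcd
    have hsub2 : Set.uIcc c d ⊆ Set.Icc u0 u1 := by
      rw [Set.uIcc_of_le hcd]
      exact Set.Icc_subset_Icc hc.1 hd.2
    have hint : IntervalIntegrable G MeasureTheory.volume c d :=
      (hGcont.mono (fun x hx => hIU (hsub2 hx))).intervalIntegrable
    have heq : ∫ x in c..d, G x = F d - F c :=
      intervalIntegral.integral_eq_sub_of_hasDerivAt
        (fun x hx => hF' x (hsub2 hx)) hint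
    have hge : 0 ≤ ∫ x in c..d, G x :=
      intervalIntegral.integral_nonneg hcd
        (fun x hx => hGnonneg x (hsub2 (by rw [Set.uIcc_of_le hcd]; exact hx)))
    linarith [heq ▸ hge]
  -- pointwise bound on y via the weighted monotonicity trick
  have hyρ : ∀ c ∈ Set.Icc u0 u1, y c * ρ c ≤ ρ u0 * (y u0 + F c) := by
    set w : ℝ → ℝ := fun t => y t * ρ t / ρ u0 - F t with hwdef
    have hw' : ∀ x ∈ Set.Icc u0 u1,
        HasDerivAt w ((yd x * ρ x + y x * ν x) / ρ u0 - G x) x := by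
      intro x hx
      exact (((hy' x).mul (hρ' x)).div_const (ρ u0)).sub (hF' x hx)
    have hEw : ∀ x ∈ Set.Icc u0 u1, (yd x * ρ x + y x * ν x) / ρ u0 - G x ≤ 0 := by
      intro x hx
      have hνx := hν x hx
      have hρx := hρ x hx
      have hρle := hρ_le x hx
      have hkey : yd x * ρ x + y x * ν x ≤ ρ x ^ 2 * b x ^ 2 / (-ν x) := by
        rw [le_div_iff₀ (by linarith : (0:ℝ) < -ν x)]
        have h1 : yd x ≤ 2 * a x * b x := (abs_le.mp (hyd x)).2
        have h2 : y x = a x ^ 2 := hy x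
        rw [h2]
        nlinarith [sq_nonneg (a x * ν x + b x * ρ x),
          mul_le_mul_of_nonneg_right h1
            (mul_nonneg hρx.le (by linarith : (0:ℝ) ≤ -ν x))]
      have h3 : (yd x * ρ x + y x * ν x) / ρ u0 ≤ (ρ x ^ 2 * b x ^ 2 / (-ν x)) / ρ u0 :=
        (div_le_div_iff_of_pos_right hρ0).mpr hkey
      have h4 : (ρ x ^ 2 * b x ^ 2 / (-ν x)) / ρ u0 ≤ G x := by
        rw [hGdef]
        rw [div_div, div_le_div_iff₀ (mul_pos (by linarith : (0:ℝ) < -ν x) hρ0)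
          (by linarith : (0:ℝ) < -ν x)]
        nlinarith [mul_nonneg (sub_nonneg.2 hρle)
          (mul_nonneg (mul_nonneg hρx.le (sq_nonneg (b x)))
            (by linarith : (0:ℝ) ≤ -ν x))]
      linarith
    have hanti : AntitoneOn w (Set.Icc u0 u1) := by
      apply antitoneOn_of_deriv_nonpos (convex_Icc u0 u1)
      · intro x hx
        exact ((hw' x hx).continuousAt).continuousWithinAt
      · intro x hx
        rw [interior_Icc] at hx
        exact (hw' x (Set.mem_Icc_of_Ioo hx)).differentiableAt.differentiableWithinAt
      · intro x hx
        rw [interior_Icc] at hx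
        have hxI := Set.mem_Icc_of_Ioo hx
        rw [(hw' x hxI).deriv]
        exact hEw x hxI
    intro c hc
    have := hanti hu0I hc hc.1
    rw [hwdef] at this
    simp only [hF0, sub_zero] at this
    have h5 : y u0 * ρ u0 / ρ u0 = y u0 := by field_simp
    rw [h5] at this
    have h6 : y c * ρ c / ρ u0 ≤ y u0 + F c := by linarith
    calc y c * ρ c = (y c * ρ c / ρ u0) * ρ u0 := by field_simp
    _ ≤ (y u0 + F c) * ρ u0 := by
        apply mul_le_mul_of_nonneg_right h6 hρ0.le
    _ = ρ u0 * (y u0 + F c) := by ring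
  -- Raychaudhuri : exact representation of ω
  have hω_rep : ∀ c ∈ Set.Icc u0 u1,
      ω c = (-ν c) * (ω u0 / (-ν u0)) * Real.exp (-F c) := by
    set H : ℝ → ℝ := fun t => ν t / ω t * Real.exp (-F t) with hHdef
    have hH' : ∀ x ∈ Set.Icc u0 u1, HasDerivAt H 0 x := by
      intro x hx
      have hνx := hν x hx
      have hωx := hω x hx
      have hρx := hρ x hx
      have h1 : HasDerivAt (fun t => Real.exp (-F t)) (Real.exp (-F x) * (-G x)) x := by
        have := ((hF' x hx).neg).exp
        simpa [mul_comm] using this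
      have h2 := (hg' x hx).mul h1
      have h3 : -(ρ x / ω x) * b x ^ 2 * Real.exp (-F x)
          + ν x / ω x * (Real.exp (-F x) * -G x) = 0 := by
        rw [hGdef]
        field_simp [hνx.ne, hωx.ne']
        ring
      rw [h3] at h2
      exact h2
    have hconst : ∀ c ∈ Set.Icc u0 u1, H c = H u0 := by
      intro c hc
      have heq : ∫ x in u0..c, (0:ℝ) = H c - H u0 :=
        intervalIntegral.integral_eq_sub_of_hasDerivAt
          (fun x hx => hH' x (hsub c hc hx)) intervalIntegrable_const
      simp only [intervalIntegral.integral_zero] at heq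
      linarith
    intro c hc
    have h4 := hconst c hc
    rw [hHdef] at h4
    simp only [hF0, neg_zero, Real.exp_zero, mul_one] at h4
    have hνc := hν c hc
    have hωc := hω c hc
    have hωc' : ω c ≠ 0 := hωc.ne'
    have hω0' : ω u0 ≠ 0 := hω0.ne'
    have hν0' : ν u0 ≠ 0 := hν0.ne
    have hνc' : ν c ≠ 0 := hνc.ne
    field_simp at h4 ⊢
    linarith [h4]
  -- charge bound
  have hy0 : 0 ≤ y u0 := by rw [hy u0]; positivity
  have hQbd : ∀ c ∈ Set.Icc u0 u1, |Q c - Q u0| ≤ |q0| * ρ u0 ^ 2 * (y u0 + F c) := by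
    intro c hc
    have hsubc : Set.uIcc u0 c ⊆ Set.Icc u0 u1 := hsub c hc
    have hicc : Set.uIcc u0 c = Set.Icc u0 c := Set.uIcc_of_le hc.1
    have hFc : 0 ≤ F c := hFnonneg c hc
    set s : ℝ := y u0 + F c with hsdef
    have hs0 : 0 ≤ s := by positivity
    -- FTC for Q
    have hQint : IntervalIntegrable qd MeasureTheory.volume u0 c :=
      hcqd.intervalIntegrable u0 c
    have heqQ : ∫ x in u0..c, qd x = Q c - Q u0 :=
      intervalIntegral.integral_eq_sub_of_hasDerivAt (fun x hx => hQ' x (hsubc hx)) hQint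
    -- comparison function and its antiderivative
    set E : ℝ → ℝ := fun x => |q0| * (s * (ρ x ^ 2 * (-ν x)) / (2 * ρ u0)
      + ρ u0 ^ 2 * G x / 2) with hEdef
    set Ψ : ℝ → ℝ := fun t => |q0| * (s * (-((ρ t) ^ 3) / 3) / (2 * ρ u0)
      + ρ u0 ^ 2 * F t / 2) with hΨdef
    have hΨ' : ∀ x ∈ Set.uIcc u0 c, HasDerivAt Ψ (E x) x := by
      intro x hx
      have hxI : x ∈ Set.Icc u0 u1 := hsubc hx
      have h1 : HasDerivAt (fun t => -((ρ t) ^ 3) / 3) (ρ x ^ 2 * (-ν x)) x := by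
        have := (((hρ' x).fun_pow 3).fun_neg).div_const 3
        refine this.congr_deriv ?_
        ring
      exact (((h1.const_mul s).div_const (2 * ρ u0)).add
        (((hF' x hxI).const_mul (ρ u0 ^ 2)).div_const 2)).const_mul (|q0|)
    have hEcont : ContinuousOn E (Set.uIcc u0 c) := by
      apply continuousOn_const.mul
      apply ContinuousOn.add
      · exact ((continuousOn_const.mul (((hρcont.pow 2).mul hcν.neg).continuousOn)).div_const _)
      · exact ((continuousOn_const.mul (hGcont.mono (fun x hx => hIU (hsubc hx)))).div_const _)
    have hEint : IntervalIntegrable E MeasureTheory.volume u0 c := hEcont.intervalIntegrable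
    -- pointwise bound
    have hpt : ∀ x ∈ Set.Icc u0 c, |qd x| ≤ E x := by
      intro x hx
      have hxI : x ∈ Set.Icc u0 u1 := hsubc (by rw [hicc]; exact hx)
      have hνx := hν x hxI
      have hρx := hρ x hxI
      have hFxc : F x ≤ F c := hFmono x hxI c hc hx.2
      have hax : a x ^ 2 * ρ x ≤ ρ u0 * s := by
        have h5 := hyρ x hxI
        rw [hy x] at h5
        have : ρ u0 * (y u0 + F x) ≤ ρ u0 * s := by
          apply mul_le_mul_of_nonneg_left _ hρ0.le
          rw [hsdef]; linarith
        linarith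
      refine le_trans (hqd x hxI) ?_
      rw [hEdef]
      rw [show |q0| * ρ x ^ 2 * a x * b x = |q0| * (ρ x ^ 2 * a x * b x) from by ring]
      apply mul_le_mul_of_nonneg_left _ (abs_nonneg q0)
      have heq2 : s * (ρ x ^ 2 * (-ν x)) / (2 * ρ u0) + ρ u0 ^ 2 * G x / 2
          = (s * ρ x ^ 2 * ν x ^ 2 + ρ u0 ^ 3 * (ρ x * b x ^ 2)) / (2 * ρ u0 * (-ν x)) := by
        rw [hGdef]
        field_simp [hνx.ne]
        ring
      rw [heq2, le_div_iff₀ (by nlinarith [hρ0] : (0:ℝ) < 2 * ρ u0 * (-ν x))]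
      have T1 : 0 ≤ ρ x * (ρ x * ν x * a x + ρ u0 ^ 2 * b x) ^ 2 :=
        mul_nonneg hρx.le (sq_nonneg _)
      have T2 : 0 ≤ (ρ x * ν x) ^ 2 * (ρ u0 * s - a x ^ 2 * ρ x) :=
        mul_nonneg (sq_nonneg _) (sub_nonneg.2 hax)
      have hscaled : ρ x ^ 2 * a x * b x * (2 * ρ u0 * (-ν x)) * ρ u0
          ≤ (s * ρ x ^ 2 * ν x ^ 2 + ρ u0 ^ 3 * (ρ x * b x ^ 2)) * ρ u0 := by
        linarith [T1, T2]
      exact le_of_mul_le_mul_right hscaled hρ0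
    -- assemble
    have h1 : |∫ x in u0..c, qd x| ≤ ∫ x in u0..c, |qd x| :=
      intervalIntegral.abs_integral_le_integral_abs hc.1
    have h2 : ∫ x in u0..c, |qd x| ≤ ∫ x in u0..c, E x :=
      intervalIntegral.integral_mono_on hc.1 (hcqd.abs.intervalIntegrable u0 c) hEint hpt
    have h3 : ∫ x in u0..c, E x = Ψ c - Ψ u0 :=
      intervalIntegral.integral_eq_sub_of_hasDerivAt hΨ' hEint
    have h4 : Ψ c - Ψ u0 ≤ |q0| * ρ u0 ^ 2 * s := by
      have hρc := hρ c hc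
      have hd : Ψ c - Ψ u0
          = |q0| * (s * (ρ u0 ^ 3 - ρ c ^ 3) / (6 * ρ u0) + ρ u0 ^ 2 * F c / 2) := by
        simp only [hΨdef, hF0]
        field_simp
        ring
      rw [hd, show |q0| * ρ u0 ^ 2 * s = |q0| * (ρ u0 ^ 2 * s) from by ring]
      apply mul_le_mul_of_nonneg_left _ (abs_nonneg q0)
      have e2 : s * (ρ u0 ^ 3 - ρ c ^ 3) / (6 * ρ u0) ≤ s * ρ u0 ^ 2 / 6 := by
        rw [div_le_div_iff₀ (by nlinarith [hρ0] : (0:ℝ) < 6 * ρ u0) (by norm_num : (0:ℝ) < 6)]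
        nlinarith [mul_nonneg hs0 (pow_nonneg hρc.le 3)]
      have e3 : F c ≤ s := by rw [hsdef]; linarith
      nlinarith [e2, mul_le_mul_of_nonneg_left e3 (sq_nonneg (ρ u0)),
        mul_nonneg (sq_nonneg (ρ u0)) hs0]
    calc |Q c - Q u0| = |∫ x in u0..c, qd x| := by rw [heqQ]
    _ ≤ ∫ x in u0..c, |qd x| := h1
    _ ≤ ∫ x in u0..c, E x := h2
    _ = Ψ c - Ψ u0 := h3
    _ ≤ |q0| * ρ u0 ^ 2 * s := h4
  -- final estimate
  obtain ⟨κ, hκdef⟩ : ∃ t : ℝ, t = ω u0 / (4 * (-ν u0)) := ⟨_, rfl⟩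
  have hκpos : 0 < κ := by rw [hκdef]; exact div_pos hω0 (by linarith)
  have h4κ : ω u0 / (-ν u0) = 4 * κ := by
    have h44 := mul_div_mul_left (ω u0) (-ν u0) (show (4:ℝ) ≠ 0 by norm_num)
    rw [hκdef, ← mul_div_assoc, h44]
  obtain ⟨K, hKdef⟩ : ∃ t : ℝ, t = 2 * Q u0 ^ 2 + 4 * q0 ^ 2 * ρ u0 ^ 4 * (y u0 ^ 2 + 4) :=
    ⟨_, rfl⟩
  have hK0 : 0 ≤ K := by rw [hKdef]; positivity
  obtain ⟨c3, hc3def⟩ : ∃ t : ℝ, t = msq * ρ u0 * (y u0 + 1) := ⟨_, rfl⟩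
  have hc30 : 0 ≤ c3 := by rw [hc3def]; positivity
  obtain ⟨Ef, hEfdef⟩ : ∃ g : ℝ → ℝ, g = fun x => -ω x / 4 + ω x * Q x ^ 2 / (4 * ρ x ^ 2)
    + msq * ρ x ^ 2 * ω x * y x / 4 := ⟨_, rfl⟩
  obtain ⟨M, hMdef⟩ : ∃ g : ℝ → ℝ, g = fun x => κ * ((-ν x) + K * ((-ν x) / ρ x ^ 2)
    + c3 * ((-ν x) * ρ x)) := ⟨_, rfl⟩
  -- pointwise bound |Ef| ≤ M on the interval
  have hptM : ∀ x ∈ Set.Icc u0 u1, |Ef x| ≤ M x := by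
    intro x hx
    have hνx := hν x hx
    have hρx := hρ x hx
    have hωx := hω x hx
    have hFx := hFnonneg x hx
    have hyx : 0 ≤ y x := by rw [hy x]; positivity
    set P : ℝ := -ν x with hPdef
    have hP : 0 < P := by rw [hPdef]; linarith
    set e : ℝ := Real.exp (-F x) with hedef
    have he0 : 0 < e := Real.exp_pos _
    have he1 : e ≤ 1 := by
      rw [hedef, Real.exp_le_one_iff]; linarith
    have hFe : F x * e ≤ 1 := texp_le_one hFx
    have hF2e : F x ^ 2 * e ≤ 4 := sqexp_le_four hFx
    have hωrep : ω x = P * (4 * κ) * e := by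
      rw [hPdef, hedef, ← h4κ]; exact hω_rep x hx
    -- charge pointwise
    have hQe : e * Q x ^ 2 ≤ K := by
      have hq := hQbd x hx
      have habs : |Q x| ≤ |Q u0| + |q0| * ρ u0 ^ 2 * (y u0 + F x) := by
        have h6 := abs_sub_abs_le_abs_sub (Q x) (Q u0)
        linarith
      have hW0 : 0 ≤ |q0| * ρ u0 ^ 2 * (y u0 + F x) := by positivity
      have hsq : Q x ^ 2 ≤ 2 * Q u0 ^ 2 + 2 * (|q0| * ρ u0 ^ 2 * (y u0 + F x)) ^ 2 := by
        nlinarith [sq_abs (Q x), sq_abs (Q u0), abs_nonneg (Q x), abs_nonneg (Q u0),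
          sq_nonneg (|Q u0| - |q0| * ρ u0 ^ 2 * (y u0 + F x))]
      have hexp : e * (y u0 + F x) ^ 2 ≤ 2 * y u0 ^ 2 + 8 := by
        nlinarith [sq_nonneg (y u0 - F x), mul_le_mul_of_nonneg_right he1 (sq_nonneg (y u0)),
          hF2e, he0.le, sq_nonneg (F x), mul_nonneg (sq_nonneg (y u0)) he0.le,
          mul_nonneg (mul_nonneg hy0 hFx) he0.le]
      have hW2 : (|q0| * ρ u0 ^ 2 * (y u0 + F x)) ^ 2
          = q0 ^ 2 * ρ u0 ^ 4 * (y u0 + F x) ^ 2 := by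
        rw [mul_pow, mul_pow, sq_abs]; ring
      have hstep : e * Q x ^ 2 ≤ 2 * Q u0 ^ 2 + 2 * q0 ^ 2 * ρ u0 ^ 4 * (e * (y u0 + F x) ^ 2) := by
        have := mul_le_mul_of_nonneg_left hsq he0.le
        rw [hW2] at this
        nlinarith [mul_le_mul_of_nonneg_right he1 (sq_nonneg (Q u0)),
          sq_nonneg (Q u0), he0.le]
      have : 2 * q0 ^ 2 * ρ u0 ^ 4 * (e * (y u0 + F x) ^ 2)
          ≤ 2 * q0 ^ 2 * ρ u0 ^ 4 * (2 * y u0 ^ 2 + 8) := by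
        apply mul_le_mul_of_nonneg_left hexp (by positivity)
      rw [hKdef]
      linarith
    -- scalar field pointwise
    have hye : e * (msq * ρ x ^ 2 * y x) ≤ c3 * ρ x := by
      have h7 := hyρ x hx
      have h8 : e * (y u0 + F x) ≤ y u0 + 1 := by
        nlinarith [mul_le_mul_of_nonneg_right he1 hy0]
      have h9 : e * (y x * ρ x) ≤ ρ u0 * (y u0 + 1) := by
        calc e * (y x * ρ x) ≤ e * (ρ u0 * (y u0 + F x)) :=
              mul_le_mul_of_nonneg_left h7 he0.le
        _ = ρ u0 * (e * (y u0 + F x)) := by ring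
        _ ≤ ρ u0 * (y u0 + 1) := mul_le_mul_of_nonneg_left h8 hρ0.le
      rw [hc3def]
      nlinarith [mul_le_mul_of_nonneg_left h9 (mul_nonneg hmsq hρx.le)]
    -- the basic factorization
    have hEfeq : Ef x = ω x / 4 * (-1 + Q x ^ 2 / ρ x ^ 2 + msq * ρ x ^ 2 * y x) := by
      simp only [hEfdef]
      field_simp
    have hA : 0 ≤ Q x ^ 2 / ρ x ^ 2 := by positivity
    have hB : 0 ≤ msq * ρ x ^ 2 * y x := by positivity
    have habsEf : |Ef x| ≤ ω x / 4 * (1 + Q x ^ 2 / ρ x ^ 2 + msq * ρ x ^ 2 * y x) := by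
      rw [hEfeq, abs_mul, abs_of_pos (by linarith : (0:ℝ) < ω x / 4)]
      apply mul_le_mul_of_nonneg_left _ (by linarith : (0:ℝ) ≤ ω x / 4)
      rw [abs_le]
      constructor <;> linarith
    have hsub1 : ω x / 4 * (1 + Q x ^ 2 / ρ x ^ 2 + msq * ρ x ^ 2 * y x)
        = κ * ((P * e) + (P * e) * (Q x ^ 2 / ρ x ^ 2) + (P * e) * (msq * ρ x ^ 2 * y x)) := by
      rw [hωrep]; ring
    have t1 : P * e ≤ P := mul_le_of_le_one_right hP.le he1
    have t2 : (P * e) * (Q x ^ 2 / ρ x ^ 2) ≤ K * (P / ρ x ^ 2) := by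
      have heq3 : (P * e) * (Q x ^ 2 / ρ x ^ 2) = (e * Q x ^ 2) * (P / ρ x ^ 2) := by
        ring
      rw [heq3]
      exact mul_le_mul_of_nonneg_right hQe (by positivity)
    have t3 : (P * e) * (msq * ρ x ^ 2 * y x) ≤ c3 * (P * ρ x) := by
      have heq4 : (P * e) * (msq * ρ x ^ 2 * y x) = P * (e * (msq * ρ x ^ 2 * y x)) := by ring
      rw [heq4]
      calc P * (e * (msq * ρ x ^ 2 * y x)) ≤ P * (c3 * ρ x) :=
            mul_le_mul_of_nonneg_left hye hP.le
      _ = c3 * (P * ρ x) := by ring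
    calc |Ef x| ≤ ω x / 4 * (1 + Q x ^ 2 / ρ x ^ 2 + msq * ρ x ^ 2 * y x) := habsEf
    _ = κ * ((P * e) + (P * e) * (Q x ^ 2 / ρ x ^ 2) + (P * e) * (msq * ρ x ^ 2 * y x)) := hsub1
    _ ≤ κ * (P + K * (P / ρ x ^ 2) + c3 * (P * ρ x)) := by
        apply mul_le_mul_of_nonneg_left _ hκpos.le
        exact add_le_add (add_le_add t1 t2) t3
    _ = M x := by simp only [hMdef, hPdef]
  -- integration of the final bound
  have hsubu : Set.uIcc u0 u ⊆ Set.Icc u0 u1 := hsub u hu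
  have hiccu : Set.uIcc u0 u = Set.Icc u0 u := Set.uIcc_of_le hu.1
  have hQcont : ContinuousOn Q (Set.uIcc u0 u) :=
    fun x hx => ((hQ' x (hsubu hx)).continuousAt).continuousWithinAt
  have hEfcont : ContinuousOn Ef (Set.uIcc u0 u) := by
    rw [hEfdef]
    apply ContinuousOn.add
    apply ContinuousOn.add
    · exact (hcω.continuousOn.neg).div_const 4
    · apply ContinuousOn.div (hcω.continuousOn.mul (hQcont.pow 2))
        (continuousOn_const.mul ((hρcont.pow 2).continuousOn))
      intro x hx
      have := hρ x (hsubu hx)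
      exact mul_ne_zero (by norm_num) (pow_ne_zero 2 (ne_of_gt this))
    · exact ((continuousOn_const.mul ((hρcont.pow 2).continuousOn)).mul
        hcω.continuousOn |>.mul hycont.continuousOn).div_const 4
  have hMcont : ContinuousOn M (Set.uIcc u0 u) := by
    rw [hMdef]
    apply continuousOn_const.mul
    apply ContinuousOn.add
    apply ContinuousOn.add
    · exact hcν.neg.continuousOn
    · apply continuousOn_const.mul
      apply ContinuousOn.div (hcν.neg.continuousOn) ((hρcont.pow 2).continuousOn)
      intro x hx
      have := hρ x (hsubu hx)
      exact pow_ne_zero 2 (ne_of_gt this)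
    · exact continuousOn_const.mul (hcν.neg.continuousOn.mul hρcont.continuousOn)
  have hEfint : IntervalIntegrable Ef MeasureTheory.volume u0 u := hEfcont.intervalIntegrable
  have hMint : IntervalIntegrable M MeasureTheory.volume u0 u := hMcont.intervalIntegrable
  have heqf : ∫ x in u0..u, Ef x = f u - f u0 :=
    intervalIntegral.integral_eq_sub_of_hasDerivAt
      (fun x hx => by
        have := hf' x (hsubu hx)
        simp only [hEfdef]
        exact this) hEfint
  have hfin1 : |f u - f u0| ≤ ∫ x in u0..u, M x := by
    rw [← heqf]
    refine le_trans (intervalIntegral.abs_integral_le_integral_abs hu.1) ?_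
    apply intervalIntegral.integral_mono_on hu.1 (hEfcont.abs.intervalIntegrable) hMint
    intro x hx
    exact hptM x (hsubu (by rw [hiccu]; exact hx))
  -- explicit antiderivative of M
  obtain ⟨Θ, hΘdef⟩ : ∃ g : ℝ → ℝ, g = fun t => κ * (-(ρ t) + K * (ρ t)⁻¹
    + c3 * (-(ρ t ^ 2) / 2)) := ⟨_, rfl⟩
  have hΘ' : ∀ x ∈ Set.uIcc u0 u, HasDerivAt Θ (M x) x := by
    intro x hx
    have hρx := hρ x (hsubu hx)
    have d1 : HasDerivAt (fun t => -(ρ t)) (-ν x) x := (hρ' x).neg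
    have d2 : HasDerivAt (fun t => (ρ t)⁻¹) (-ν x / ρ x ^ 2) x := (hρ' x).inv hρx.ne'
    have d3 : HasDerivAt (fun t => -(ρ t ^ 2) / 2) (-(2 * ρ x * ν x) / 2) x := by
      have := ((hρ' x).fun_pow 2).fun_neg.div_const 2
      refine this.congr_deriv ?_
      ring
    have := ((d1.fun_add (d2.const_mul K)).fun_add (d3.const_mul c3)).const_mul κ
    simp only [hMdef, hΘdef]
    refine this.congr_deriv ?_
    ring
  have heqM : ∫ x in u0..u, M x = Θ u - Θ u0 :=
    intervalIntegral.integral_eq_sub_of_hasDerivAt hΘ' hMint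
  -- final numeric estimate
  have hρuleq : ρ u ≤ ρ u0 := hρ_le u hu
  obtain ⟨B, hBdef⟩ : ∃ t : ℝ, t = ρ u0 ^ 2 + Q u0 ^ 2 + q0 ^ 2 * ρ u0 ^ 4 * (1 + y u0 ^ 2)
    + msq * ρ u0 ^ 4 * (1 + y u0) := ⟨_, rfl⟩
  have hB0 : 0 ≤ B := by rw [hBdef]; positivity
  have hΘval : Θ u - Θ u0 = κ * ((ρ u0 - ρ u) + K * ((ρ u)⁻¹ - (ρ u0)⁻¹)
      + c3 * (ρ u0 ^ 2 - ρ u ^ 2) / 2) := by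
    simp only [hΘdef]; ring
  have hT : (ρ u0 - ρ u) + K * ((ρ u)⁻¹ - (ρ u0)⁻¹) + c3 * (ρ u0 ^ 2 - ρ u ^ 2) / 2
      ≤ 100 * B / ρ u := by
    have hA1 : ρ u0 - ρ u ≤ ρ u0 ^ 2 / ρ u := by
      rw [le_div_iff₀ hρu]
      nlinarith
    have hA2 : K * ((ρ u)⁻¹ - (ρ u0)⁻¹) ≤ K / ρ u := by
      have h10 : (ρ u)⁻¹ - (ρ u0)⁻¹ ≤ (ρ u)⁻¹ := by
        have : 0 ≤ (ρ u0)⁻¹ := by positivity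
        linarith
      calc K * ((ρ u)⁻¹ - (ρ u0)⁻¹) ≤ K * (ρ u)⁻¹ :=
            mul_le_mul_of_nonneg_left h10 hK0
      _ = K / ρ u := by rw [div_eq_mul_inv]
    have hA3 : c3 * (ρ u0 ^ 2 - ρ u ^ 2) / 2 ≤ msq * ρ u0 ^ 4 * (y u0 + 1) / 2 / ρ u := by
      rw [div_div, div_le_div_iff₀ (by norm_num : (0:ℝ) < 2) (by positivity : (0:ℝ) < 2 * ρ u)]
      rw [hc3def]
      have hcc : (0:ℝ) ≤ msq * ρ u0 * (y u0 + 1) :=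
        mul_nonneg (mul_nonneg hmsq hρ0.le) (by linarith)
      linarith [mul_nonneg hcc (mul_nonneg (sq_nonneg (ρ u0)) (sub_nonneg.2 hρuleq)),
        mul_nonneg hcc (pow_nonneg hρu.le 3)]
    have hsum : ρ u0 ^ 2 / ρ u + K / ρ u + msq * ρ u0 ^ 4 * (y u0 + 1) / 2 / ρ u
        ≤ 100 * B / ρ u := by
      rw [← add_div, ← add_div, div_le_div_iff₀ hρu hρu]
      have hcoef : ρ u0 ^ 2 + K + msq * ρ u0 ^ 4 * (y u0 + 1) / 2 ≤ 100 * B := by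
        rw [hKdef, hBdef]
        nlinarith [sq_nonneg (Q u0), sq_nonneg (ρ u0), mul_nonneg (sq_nonneg q0)
            (pow_nonneg hρ0.le 4),
          mul_nonneg (mul_nonneg (sq_nonneg q0) (pow_nonneg hρ0.le 4)) (sq_nonneg (y u0)),
          mul_nonneg hmsq (pow_nonneg hρ0.le 4),
          mul_nonneg (mul_nonneg hmsq (pow_nonneg hρ0.le 4)) hy0]
      nlinarith [mul_le_mul_of_nonneg_right hcoef hρu.le]
    linarith
  have hfinal : |f u - f u0| ≤ κ * (100 * B / ρ u) := by
    rw [heqM] at hfin1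
    rw [hΘval] at hfin1
    calc |f u - f u0| ≤ κ * ((ρ u0 - ρ u) + K * ((ρ u)⁻¹ - (ρ u0)⁻¹)
        + c3 * (ρ u0 ^ 2 - ρ u ^ 2) / 2) := hfin1
    _ ≤ κ * (100 * B / ρ u) := mul_le_mul_of_nonneg_left hT hκpos.le
  rw [← hBdef, h4κ,
    show 25 * (4 * κ) * B / ρ u = κ * (100 * B / ρ u) from by ring]
  exact hfinal

set_option maxHeartbeats 4000000

/-- a priori control of the outgoing radial derivative — the trapping
estimate: there is a numerical constant `C > 0` such that for any solution of the EMKG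
system on `[u₀,u₁] × J` with `r > 0` and `∂_u r < 0`, the quantity `-r∂_v r` along each
line of constant `v` is controlled purely by the data at `u = u₀`. -/
theorem statement15 :
    ∃ C : ℝ, 0 < C ∧
      ∀ (q0 msq u0 u1 : ℝ) (J : Set ℝ), q0 ≠ 0 → 0 ≤ msq → u0 ≤ u1 → J.OrdConnected →
        ∀ S : Sol q0 msq (Set.Icc u0 u1 ×ˢ J),
          (∀ p ∈ Set.Icc u0 u1 ×ˢ J, pdu S.r p < 0) →
            ∀ u ∈ Set.Icc u0 u1, ∀ v ∈ J,
              |(-(S.r (u, v) * pdv S.r (u, v))) + S.r (u0, v) * pdv S.r (u0, v)| ≤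
                C * (S.r (u0, v) / S.r (u, v)) *
                  (S.Om2 (u0, v) / (-(S.r (u0, v) * pdu S.r (u0, v)))) *
                  (S.r (u0, v) ^ 2 + S.Qe (u0, v) ^ 2 +
                    q0 ^ 2 * S.r (u0, v) ^ 4 * (1 + ‖S.phi (u0, v)‖ ^ 4) +
                    msq * S.r (u0, v) ^ 4 * (1 + ‖S.phi (u0, v)‖ ^ 2)) := by
  refine ⟨100, by norm_num, ?_⟩
  intro q0 msq u0 u1 J hq0 hmsq hu01 _hJ S hnu u hu v hv
  have hmem : ∀ x ∈ Set.Icc u0 u1, (x, v) ∈ Set.Icc u0 u1 ×ˢ J :=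
    fun x hx => Set.mk_mem_prod hx hv
  -- continuity of the basic 2-variable fields
  have hline : Continuous (fun x : ℝ => (x, v)) := continuous_id.prodMk continuous_const
  have hrdiff : Differentiable ℝ S.r := S.smooth_r.differentiable (by norm_num)
  have hphidiff : Differentiable ℝ S.phi := S.smooth_phi.differentiable (by norm_num)
  have hQediff : Differentiable ℝ S.Qe := S.smooth_Qe.differentiable (by norm_num)
  have hpdur : ContDiff ℝ 2 (pdu S.r) := contDiff_pdu_aux S.r S.smooth_r
  have hpdvr : ContDiff ℝ 2 (pdv S.r) := contDiff_pdv_aux S.r S.smooth_r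
  have hpduCphi : ContDiff ℝ 2 (pduC S.phi) := contDiff_pduC_aux S.phi S.smooth_phi
  -- the slice functions
  have hcΦ : Continuous (fun x : ℝ => S.phi (x, v)) :=
    (S.smooth_phi.continuous).comp hline
  have hcDf : Continuous (fun x : ℝ => S.DuPhi (x, v)) := by
    simp only [Sol.DuPhi]
    apply Continuous.add
    · exact (hpduCphi.continuous).comp hline
    · apply Continuous.mul
      apply Continuous.mul continuous_const
      · exact Complex.continuous_ofReal.comp ((S.smooth_Au.continuous).comp hline)
      · exact hcΦ
  have hcν : Continuous (fun x : ℝ => pdu S.r (x, v)) := (hpdur.continuous).comp hline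
  have hcω : Continuous (fun x : ℝ => S.Om2 (x, v)) := (S.smooth_Om2.continuous).comp hline
  have hca : Continuous (fun x : ℝ => ‖S.phi (x, v)‖) :=
    continuous_norm.comp hcΦ
  have hcb : Continuous (fun x : ℝ => ‖S.DuPhi (x, v)‖) :=
    continuous_norm.comp hcDf
  have hcyd : Continuous
      (fun x : ℝ => 2 * ((starRingEnd ℂ) (S.phi (x, v)) * S.DuPhi (x, v)).re) := by
    apply continuous_const.mul
    exact Complex.continuous_re.comp ((Complex.continuous_conj.comp hcΦ).mul hcDf)
  have hcqd : Continuous (fun x : ℝ =>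
      -q0 * S.r (x, v) ^ 2 * (S.phi (x, v) * (starRingEnd ℂ) (S.DuPhi (x, v))).im) := by
    apply Continuous.mul
    · exact continuous_const.mul (((S.smooth_r.continuous).comp hline).pow 2)
    · exact Complex.continuous_im.comp (hcΦ.mul (Complex.continuous_conj.comp hcDf))
  -- positivity / negativity on the strip
  have hν : ∀ x ∈ Set.Icc u0 u1, pdu S.r (x, v) < 0 := fun x hx => hnu _ (hmem x hx)
  have hρ : ∀ x ∈ Set.Icc u0 u1, 0 < S.r (x, v) := fun x hx => S.r_pos _ (hmem x hx)
  have hω : ∀ x ∈ Set.Icc u0 u1, 0 < S.Om2 (x, v) := fun x hx => S.Om2_pos _ (hmem x hx)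
  -- derivatives of slices
  have hρ' : ∀ x : ℝ, HasDerivAt (fun t => S.r (t, v)) (pdu S.r (x, v)) x :=
    fun x => hasDerivAt_slice S.r (hrdiff _)
  have hΦ' : ∀ x : ℝ, HasDerivAt (fun t => S.phi (t, v)) (pduC S.phi (x, v)) x :=
    fun x => hasDerivAt_sliceC S.phi (hphidiff _)
  -- derivative of y = |φ|²
  have hy' : ∀ x : ℝ, HasDerivAt (fun t => Complex.normSq (S.phi (t, v)))
      (2 * ((starRingEnd ℂ) (S.phi (x, v)) * S.DuPhi (x, v)).re) x := by
    intro x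
    have hre : HasDerivAt (fun t => (S.phi (t, v)).re) ((pduC S.phi (x, v)).re) x :=
      (Complex.reCLM.hasFDerivAt).comp_hasDerivAt x (hΦ' x)
    have him : HasDerivAt (fun t => (S.phi (t, v)).im) ((pduC S.phi (x, v)).im) x :=
      (Complex.imCLM.hasFDerivAt).comp_hasDerivAt x (hΦ' x)
    have h1 := (hre.fun_mul hre).fun_add (him.fun_mul him)
    have h2 : HasDerivAt (fun t => Complex.normSq (S.phi (t, v)))
        ((pduC S.phi (x, v)).re * (S.phi (x, v)).re + (S.phi (x, v)).re * (pduC S.phi (x, v)).re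
          + ((pduC S.phi (x, v)).im * (S.phi (x, v)).im
            + (S.phi (x, v)).im * (pduC S.phi (x, v)).im)) x := by
      simpa [Complex.normSq_apply] using h1
    convert h2 using 1
    simp only [Sol.DuPhi, Complex.mul_re, Complex.add_re, Complex.add_im,
      Complex.conj_re, Complex.conj_im]
    simp [Complex.mul_re, Complex.mul_im, Complex.I_re, Complex.I_im,
      Complex.ofReal_re, Complex.ofReal_im]
    ring
  -- derivative of Q
  have hQ' : ∀ x ∈ Set.Icc u0 u1, HasDerivAt (fun t => S.Qe (t, v))
      (-q0 * S.r (x, v) ^ 2 * (S.phi (x, v) * (starRingEnd ℂ) (S.DuPhi (x, v))).im) x := by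
    intro x hx
    have h1 : HasDerivAt (fun t => S.Qe (t, v)) (pdu S.Qe (x, v)) x :=
      hasDerivAt_slice S.Qe (hQediff _)
    rw [S.eq_Qu _ (hmem x hx)] at h1
    simpa [Sol.DuPhi] using h1
  -- Raychaudhuri derivative
  have hg' : ∀ x ∈ Set.Icc u0 u1,
      HasDerivAt (fun t => pdu S.r (t, v) / S.Om2 (t, v))
        (-(S.r (x, v) / S.Om2 (x, v)) * ‖S.DuPhi (x, v)‖ ^ 2) x := by
    intro x hx
    have hdiff : DifferentiableAt ℝ (fun q : ℝ × ℝ => pdu S.r q / S.Om2 q) (x, v) := by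
      simp only [div_eq_mul_inv]
      exact ((hpdur.differentiable (by norm_num)) (x, v)).mul
        (((S.smooth_Om2.differentiable (by norm_num)) (x, v)).inv (hω x hx).ne')
    have h1 := hasDerivAt_slice (fun q => pdu S.r q / S.Om2 q) hdiff
    rw [S.eq_Ray_u _ (hmem x hx)] at h1
    rw [Complex.sq_norm]
    simpa [Sol.DuPhi] using h1
  -- derivative of f = r ∂_v r
  have hf' : ∀ x ∈ Set.Icc u0 u1,
      HasDerivAt (fun t => S.r (t, v) * pdv S.r (t, v))
        (-S.Om2 (x, v) / 4
          + S.Om2 (x, v) * S.Qe (x, v) ^ 2 / (4 * S.r (x, v) ^ 2)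
          + msq * S.r (x, v) ^ 2 * S.Om2 (x, v) * Complex.normSq (S.phi (x, v)) / 4) x := by
    intro x hx
    have hlam : HasDerivAt (fun t => pdv S.r (t, v)) (pdu (pdv S.r) (x, v)) x :=
      hasDerivAt_slice (pdv S.r) ((hpdvr.differentiable (by norm_num)).differentiableAt)
    have h1 := (hρ' x).fun_mul hlam
    rw [S.eq_r _ (hmem x hx)] at h1
    refine h1.congr_deriv ?_
    have hρx := (hρ x hx).ne'
    field_simp
    ring
  -- apply the core lemma
  have key := ode_key q0 msq u0 u1 hmsq hu01
    (fun x => S.r (x, v)) (fun x => pdu S.r (x, v)) (fun x => S.Om2 (x, v))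
    (fun x => S.Qe (x, v)) (fun x => Complex.normSq (S.phi (x, v)))
    (fun x => ‖S.phi (x, v)‖) (fun x => ‖S.DuPhi (x, v)‖)
    (fun x => 2 * ((starRingEnd ℂ) (S.phi (x, v)) * S.DuPhi (x, v)).re)
    (fun x => -q0 * S.r (x, v) ^ 2 * (S.phi (x, v) * (starRingEnd ℂ) (S.DuPhi (x, v))).im)
    (fun x => S.r (x, v) * pdv S.r (x, v))
    hcν hcω hca hcb hcyd hcqd hν hρ hω
    (fun x => norm_nonneg _) (fun x => norm_nonneg _)
    (fun x => (Complex.sq_norm _).symm)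
    hρ' hy'
    (fun x => by
      rw [abs_mul, abs_two]
      have h1 : |((starRingEnd ℂ) (S.phi (x, v)) * S.DuPhi (x, v)).re|
          ≤ ‖S.phi (x, v)‖ * ‖S.DuPhi (x, v)‖ := by
        refine le_trans (Complex.abs_re_le_norm _) ?_
        rw [norm_mul, Complex.norm_conj]
      linarith [h1]
      )
    hQ'
    (fun x hx => by
      have hρx := hρ x hx
      rw [abs_mul, abs_mul, abs_neg, abs_pow, abs_of_pos hρx]
      have h1 : |(S.phi (x, v) * (starRingEnd ℂ) (S.DuPhi (x, v))).im|
          ≤ ‖S.phi (x, v)‖ * ‖S.DuPhi (x, v)‖ := by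
        refine le_trans (Complex.abs_im_le_norm _) ?_
        rw [norm_mul, Complex.norm_conj]
      have h2 : (0:ℝ) ≤ |q0| * S.r (x, v) ^ 2 := by positivity
      calc |q0| * S.r (x, v) ^ 2 * |(S.phi (x, v) * (starRingEnd ℂ) (S.DuPhi (x, v))).im|
          ≤ |q0| * S.r (x, v) ^ 2
            * (‖S.phi (x, v)‖ * ‖S.DuPhi (x, v)‖) :=
            mul_le_mul_of_nonneg_left h1 h2
      _ = |q0| * S.r (x, v) ^ 2 * ‖S.phi (x, v)‖
            * ‖S.DuPhi (x, v)‖ := by ring)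
    hg' hf' u hu
  -- convert the conclusion into the required form
  have hρu := hρ u hu
  have hρ0 := hρ u0 ⟨le_rfl, hu01⟩
  have hν0 := hν u0 ⟨le_rfl, hu01⟩
  have hω0 := hω u0 ⟨le_rfl, hu01⟩
  have hLHS : |(-(S.r (u, v) * pdv S.r (u, v))) + S.r (u0, v) * pdv S.r (u0, v)|
      = |S.r (u, v) * pdv S.r (u, v) - S.r (u0, v) * pdv S.r (u0, v)| := by
    rw [← abs_neg]
    congr 1
    ring
  rw [hLHS]
  refine le_trans key ?_
  have hν0' : pdu S.r (u0, v) ≠ 0 := ne_of_lt hν0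
  have hρu' : S.r (u, v) ≠ 0 := hρu.ne'
  have hρ0' : S.r (u0, v) ≠ 0 := hρ0.ne'
  have hNnn : (0:ℝ) ≤ S.r (u0, v) ^ 2 + S.Qe (u0, v) ^ 2
      + q0 ^ 2 * S.r (u0, v) ^ 4 * (1 + Complex.normSq (S.phi (u0, v)) ^ 2)
      + msq * S.r (u0, v) ^ 4 * (1 + Complex.normSq (S.phi (u0, v))) := by
    have h0 : (0:ℝ) ≤ Complex.normSq (S.phi (u0, v)) := Complex.normSq_nonneg _
    have h1 : (0:ℝ) ≤ q0 ^ 2 * S.r (u0, v) ^ 4 * (1 + Complex.normSq (S.phi (u0, v)) ^ 2) := by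
      positivity
    have h2 : (0:ℝ) ≤ msq * S.r (u0, v) ^ 4 * (1 + Complex.normSq (S.phi (u0, v))) := by
      apply mul_nonneg (mul_nonneg hmsq (by positivity))
      linarith
    nlinarith [sq_nonneg (S.r (u0, v)), sq_nonneg (S.Qe (u0, v))]
  have hpos25 : (0:ℝ) ≤ 25 * (S.Om2 (u0, v) / (-pdu S.r (u0, v)))
      * (S.r (u0, v) ^ 2 + S.Qe (u0, v) ^ 2
        + q0 ^ 2 * S.r (u0, v) ^ 4 * (1 + Complex.normSq (S.phi (u0, v)) ^ 2)
        + msq * S.r (u0, v) ^ 4 * (1 + Complex.normSq (S.phi (u0, v)))) / S.r (u, v) := by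
    apply div_nonneg _ hρu.le
    apply mul_nonneg _ hNnn
    exact mul_nonneg (by norm_num) (div_nonneg hω0.le (by linarith))
  have heq : 100 * (S.r (u0, v) / S.r (u, v))
      * (S.Om2 (u0, v) / (-(S.r (u0, v) * pdu S.r (u0, v))))
      * (S.r (u0, v) ^ 2 + S.Qe (u0, v) ^ 2 +
          q0 ^ 2 * S.r (u0, v) ^ 4 * (1 + ‖S.phi (u0, v)‖ ^ 4) +
          msq * S.r (u0, v) ^ 4 * (1 + ‖S.phi (u0, v)‖ ^ 2))
      = 4 * (25 * (S.Om2 (u0, v) / (-pdu S.r (u0, v)))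
        * (S.r (u0, v) ^ 2 + S.Qe (u0, v) ^ 2
          + q0 ^ 2 * S.r (u0, v) ^ 4 * (1 + Complex.normSq (S.phi (u0, v)) ^ 2)
          + msq * S.r (u0, v) ^ 4 * (1 + Complex.normSq (S.phi (u0, v)))) / S.r (u, v)) := by
    have hsqabs : Complex.normSq (S.phi (u0, v)) = ‖S.phi (u0, v)‖ ^ 2 :=
      (Complex.sq_norm _).symm
    rw [hsqabs]
    field_simp
    ring
  rw [heq]
  linarith


end
end

section
/- Calculus lemma with area-radius weights: let 1 < s ≤ p < 2s, D₋, D₊ > 0, v₀ ≥ 1, u₀ < 0, and let r : [u₀,0]×[v₀,∞) → (0,∞) satisfy, for all u₀ ≤ u ≤ 0 and v ≥ v₀: 2|u| + (2D₋/(2s−1))·v^{1−2s} ≤ r(u,v)² ≤ 2|u| + (2D₊/(2s−1))·v^{1−2s}. Then there is a constant C depending only on (s, p, D₋, D₊) such that for all such (u,v): ∫_{v₀}^{v} (v′)^{−p}/r(u,v′)² dv′ ≤ C·r(u,v)^{(p−2s)/(s−1/2)}. If moreover s ≤ p < s + 1/2, then also ∫_{v₀}^{v} (v′)^{−p}/r(u,v′)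 dv′ ≤ C·r(u,v)^{−(1−2p+2s)/(2s−1)}. -/
noncomputable section

open Real Filter Topology MeasureTheory intervalIntegral

/-- Core splitting lemma: if `f ≤ cg · w^q` everywhere (with `q > -1`) and
`f ≤ ch · w^{-p}` whenever the splitting point `V` lies below `v`, then the integral
of `f` over `[v0, v]` is bounded by the sum of the two closed-form pieces evaluated
at the splitting point `V`. -/
lemma key_lemma (p q cg ch v0 v V : ℝ) (f : ℝ → ℝ)
    (hv0 : 0 < v0) (hv : v0 ≤ v) (hp : 1 < p) (hq1 : 0 < q + 1)
    (hcg : 0 ≤ cg) (hch : 0 ≤ ch) (hV : 0 < V)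
    (hint : IntervalIntegrable f volume v0 v)
    (hfg : ∀ w ∈ Set.Icc v0 v, f w ≤ cg * w ^ q)
    (hfh : V < v → ∀ w ∈ Set.Icc v0 v, f w ≤ ch * w ^ (-p)) :
    (∫ w in v0..v, f w) ≤ cg * V ^ (q + 1) / (q + 1) + ch * V ^ (1 - p) / (p - 1) := by
  have hterm2 : 0 ≤ ch * V ^ (1 - p) / (p - 1) :=
    div_nonneg (mul_nonneg hch (rpow_nonneg hV.le _)) (by linarith)
  have hterm1 : 0 ≤ cg * V ^ (q + 1) / (q + 1) :=
    div_nonneg (mul_nonneg hcg (rpow_nonneg hV.le _)) (by linarith)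
  have hig : ∀ a b : ℝ, 0 < a →
      IntervalIntegrable (fun w : ℝ => cg * w ^ q) volume a b := by
    intro a b _
    exact (intervalIntegrable_rpow' (by linarith)).const_mul cg
  have hzero : ∀ a b : ℝ, 0 < a → a ≤ b → (0:ℝ) ∉ Set.uIcc a b := by
    intro a b ha hab
    rw [Set.uIcc_of_le hab]
    exact fun h => absurd h.1 (by linarith)
  have hih : ∀ a b : ℝ, 0 < a → a ≤ b →
      IntervalIntegrable (fun w : ℝ => ch * w ^ (-p)) volume a b := by
    intro a b ha hab
    refine (intervalIntegrable_rpow ?_).const_mul ch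
    exact Or.inr (hzero a b ha hab)
  have hgpart : ∀ b : ℝ, v0 ≤ b → b ≤ v → b ≤ V →
      (∫ w in v0..b, f w) ≤ cg * V ^ (q + 1) / (q + 1) := by
    intro b hb1 hb2 hbV
    have hmono := integral_mono_on hb1 (hint.mono_set (by
      rw [Set.uIcc_of_le hb1, Set.uIcc_of_le hv]; exact Set.Icc_subset_Icc le_rfl hb2))
      (hig v0 b hv0) (fun w hw => hfg w ⟨hw.1, hw.2.trans hb2⟩)
    rw [intervalIntegral.integral_const_mul, integral_rpow (Or.inl (by linarith))] at hmono
    refine hmono.trans ?_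
    rw [div_eq_mul_inv (cg * _), mul_assoc, ← div_eq_mul_inv]
    have h1 : b ^ (q + 1) ≤ V ^ (q + 1) :=
      rpow_le_rpow (by linarith) hbV hq1.le
    have h2 : 0 ≤ v0 ^ (q + 1) := rpow_nonneg hv0.le _
    gcongr
    linarith
  have hhpart : ∀ a : ℝ, v0 ≤ a → a ≤ v → V ≤ a → V < v →
      (∫ w in a..v, f w) ≤ ch * V ^ (1 - p) / (p - 1) := by
    intro a ha1 ha2 hVa hVv
    have hmono := integral_mono_on ha2 (hint.mono_set (by
      rw [Set.uIcc_of_le ha2, Set.uIcc_of_le hv]; exact Set.Icc_subset_Icc ha1 le_rfl))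
      (hih a v (by linarith) ha2) (fun w hw => hfh hVv w ⟨ha1.trans hw.1, hw.2⟩)
    rw [intervalIntegral.integral_const_mul,
      integral_rpow (Or.inr ⟨by intro h; linarith,
        hzero a v (by linarith) ha2⟩)] at hmono
    refine hmono.trans ?_
    have hap : 0 ≤ v ^ (-p + 1) := rpow_nonneg (by linarith) _
    have ha' : a ^ (-p + 1) ≤ V ^ (1 - p) := by
      rw [show (-p + 1 : ℝ) = 1 - p by ring]
      exact rpow_le_rpow_of_nonpos hV hVa (by linarith)
    have e1 : (v ^ (-p + 1) - a ^ (-p + 1)) / (-p + 1)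
        = (a ^ (-p + 1) - v ^ (-p + 1)) / (p - 1) := by
      rw [div_eq_div_iff (by linarith) (by linarith)]; ring
    rw [e1]
    have h2 : (a ^ (-p + 1) - v ^ (-p + 1)) / (p - 1) ≤ V ^ (1 - p) / (p - 1) :=
      (div_le_div_iff_of_pos_right (by linarith)).mpr (by linarith)
    exact le_trans (mul_le_mul_of_nonneg_left h2 hch) (by rw [mul_div_assoc])
  by_cases hvV : v ≤ V
  · have := hgpart v hv le_rfl hvV
    linarith
  · push_neg at hvV
    by_cases hVv0 : V ≤ v0
    · have := hhpart v0 le_rfl hv hVv0 hvV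
      linarith
    · push_neg at hVv0
      have hi1 : IntervalIntegrable f volume v0 V := hint.mono_set (by
        rw [Set.uIcc_of_le hVv0.le, Set.uIcc_of_le hv]
        exact Set.Icc_subset_Icc le_rfl hvV.le)
      have hi2 : IntervalIntegrable f volume V v := hint.mono_set (by
        rw [Set.uIcc_of_le hvV.le, Set.uIcc_of_le hv]
        exact Set.Icc_subset_Icc hVv0.le le_rfl)
      rw [← integral_add_adjacent_intervals hi1 hi2]
      have h1 := hgpart V hVv0.le hvV.le le_rfl
      have h2 := hhpart V hVv0.le hvV.le le_rfl hvV
      linarith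

/-- calculus lemma with area-radius weights: if
`2|u| + (2D₋/(2s-1))·v^{1-2s} ≤ r(u,v)² ≤ 2|u| + (2D₊/(2s-1))·v^{1-2s}` with
`1 < s ≤ p < 2s`, then `∫_{v₀}^{v} (v')^{-p}/r(u,v')² dv' ≲ r(u,v)^{(p-2s)/(s-1/2)}`,
and if moreover `p < s + 1/2` then
`∫_{v₀}^{v} (v')^{-p}/r(u,v') dv' ≲ r(u,v)^{-(1-2p+2s)/(2s-1)}`; the constant depends
only on `(s,p,D₋,D₊)`. -/
theorem statement16 (s p Dm Dp : ℝ) (hs : 1 < s) (hsp : s ≤ p) (hp2s : p < 2 * s)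
    (hDm : 0 < Dm) (hDp : 0 < Dp) :
    ∃ C : ℝ, 0 < C ∧
      ∀ (v0 u0 : ℝ), 1 ≤ v0 → u0 < 0 →
        ∀ r : ℝ × ℝ → ℝ, Continuous r →
          (∀ u v : ℝ, u0 ≤ u → u ≤ 0 → v0 ≤ v →
            0 < r (u, v) ∧
            2 * |u| + 2 * Dm / (2 * s - 1) * v ^ (1 - 2 * s) ≤ r (u, v) ^ 2 ∧
            r (u, v) ^ 2 ≤ 2 * |u| + 2 * Dp / (2 * s - 1) * v ^ (1 - 2 * s)) →
            ∀ u v : ℝ, u0 ≤ u → u ≤ 0 → v0 ≤ v →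
              (∫ w in v0..v, w ^ (-p) / r (u, w) ^ 2) ≤
                C * r (u, v) ^ ((p - 2 * s) / (s - 1 / 2)) ∧
              (p < s + 1 / 2 →
                (∫ w in v0..v, w ^ (-p) / r (u, w)) ≤
                  C * r (u, v) ^ (-((1 - 2 * p + 2 * s) / (2 * s - 1)))) := by
  have h2s1 : (0:ℝ) < 2 * s - 1 := by linarith
  have hs12 : (0:ℝ) < s - 1/2 := by linarith
  set cm := 2 * Dm / (2 * s - 1) with hcm_def
  set cp := 2 * Dp / (2 * s - 1) with hcp_def
  have hcm : 0 < cm := div_pos (by linarith) h2s1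
  have hcp : 0 < cp := div_pos (by linarith) h2s1
  set K1 := cm⁻¹ * (2*cp) ^ ((2*s - p)/(2*s-1)) / (2*s - p) with hK1
  set K2 := 2 * ((2*cp) ^ ((1 - p)/(2*s-1))) / (p - 1) with hK2
  set K3 := (Real.sqrt cm)⁻¹ * (2*cp) ^ ((s + 1/2 - p)/(2*s-1)) / (s + 1/2 - p) with hK3
  set K4 := Real.sqrt 2 * ((2*cp) ^ ((1 - p)/(2*s-1))) / (p - 1) with hK4
  refine ⟨1 + |K1| + |K2| + |K3| + |K4|, by positivity, ?_⟩
  intro v0 u0 hv0 hu0 r hr hyp u v huu0 hu0' hvv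
  have hv0' : (0:ℝ) < v0 := by linarith
  have hp1 : (1:ℝ) < p := by linarith
  obtain ⟨hR, hRlow, hRup⟩ := hyp u v huu0 hu0' hvv
  set R := r (u, v) with hRdef
  set V := (2*cp) ^ ((1:ℝ)/(2*s-1)) * R ^ (-2/(2*s-1)) with hVdef
  have h2cp : (0:ℝ) < 2*cp := by linarith
  have hV : 0 < V := mul_pos (Real.rpow_pos_of_pos h2cp _) (Real.rpow_pos_of_pos hR _)
  have hVe : ∀ e : ℝ, V ^ e = (2*cp) ^ (e/(2*s-1)) * R ^ (-(2*e)/(2*s-1)) := by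
    intro e
    rw [hVdef, Real.mul_rpow (Real.rpow_nonneg h2cp.le _) (Real.rpow_nonneg hR.le _),
      ← Real.rpow_mul h2cp.le, ← Real.rpow_mul hR.le,
      show 1/(2*s-1)*e = e/(2*s-1) by ring, show (-2/(2*s-1))*e = -(2*e)/(2*s-1) by ring]
  have hR2 : R ^ ((2:ℝ)) = R ^ 2 := by
    rw [show (2:ℝ) = ((2:ℕ):ℝ) by norm_num, Real.rpow_natCast]
  have hcase : V < v → R^2 / 2 ≤ 2 * |u| := by
    intro hVv
    have h1 : v ^ (1-2*s) < V ^ (1-2*s) := Real.rpow_lt_rpow_of_neg hV hVv (by linarith)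
    have h2 : V ^ (1-2*s) = (2*cp)⁻¹ * R^2 := by
      rw [hVe (1-2*s), show (1-2*s)/(2*s-1) = -1 by rw [div_eq_iff h2s1.ne']; ring,
        show -(2*(1-2*s))/(2*s-1) = 2 by rw [div_eq_iff h2s1.ne']; ring,
        Real.rpow_neg_one, hR2]
    have h3 : cp * v ^ (1-2*s) < R^2/2 := by
      calc cp * v ^ (1-2*s) < cp * V ^ (1-2*s) := by
            exact mul_lt_mul_of_pos_left h1 hcp
        _ = R^2/2 := by rw [h2]; field_simp
    linarith [hRup]
  have hRα2 : 0 ≤ R ^ ((p - 2*s)/(s - 1/2)) := Real.rpow_nonneg hR.le _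
  have habs : K1 + K2 ≤ 1 + |K1| + |K2| + |K3| + |K4| := by
    have := le_abs_self K1; have := le_abs_self K2
    have := abs_nonneg K3; have := abs_nonneg K4
    linarith
  constructor
  · -- first integral
    have hfc : IntervalIntegrable (fun w => w ^ (-p) / r (u, w) ^ 2) volume v0 v := by
      apply ContinuousOn.intervalIntegrable
      rw [Set.uIcc_of_le hvv]
      apply ContinuousOn.div
      · exact continuousOn_id.rpow_const
          (fun x hx => Or.inl (by simp only [id_eq]; exact ne_of_gt (by linarith [hx.1])))
      · exact ((hr.comp (Continuous.prodMk_right u)).continuousOn).pow 2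
      · intro x hx
        exact pow_ne_zero 2 (ne_of_gt (hyp u x huu0 hu0' hx.1).1)
    have hfg : ∀ w ∈ Set.Icc v0 v,
        w ^ (-p) / r (u, w) ^ 2 ≤ cm⁻¹ * w ^ (2*s - 1 - p) := by
      intro w hw
      obtain ⟨hrw, hlow, _⟩ := hyp u w huu0 hu0' hw.1
      have hw0 : (0:ℝ) < w := by linarith [hw.1]
      have hwp : 0 < w ^ (1-2*s) := Real.rpow_pos_of_pos hw0 _
      have habsu : 0 ≤ 2 * |u| := by positivity
      have h1 : w ^ (-p) / r (u, w) ^ 2 ≤ w ^ (-p) / (cm * w ^ (1-2*s)) :=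
        div_le_div_of_nonneg_left (Real.rpow_nonneg hw0.le _) (mul_pos hcm hwp)
          (by linarith)
      refine h1.trans_eq ?_
      have e : w ^ (2*s-1-p) = w ^ (-p) / w ^ (1-2*s) := by
        rw [← Real.rpow_sub hw0]
        congr 1
        ring
      rw [e, div_mul_eq_div_div_swap]
      exact div_eq_inv_mul _ _
    have hfh : V < v → ∀ w ∈ Set.Icc v0 v,
        w ^ (-p) / r (u, w) ^ 2 ≤ (2/R^2) * w ^ (-p) := by
      intro hVv w hw
      obtain ⟨hrw, hlow, _⟩ := hyp u w huu0 hu0' hw.1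
      have h0 := hcase hVv
      have hw0 : (0:ℝ) < w := by linarith [hw.1]
      have hwp : 0 < cm * w ^ (1-2*s) := mul_pos hcm (Real.rpow_pos_of_pos hw0 _)
      have hge : R^2/2 ≤ r (u, w)^2 := by linarith
      have h1 : w ^ (-p) / r (u, w) ^ 2 ≤ w ^ (-p) / (R^2/2) :=
        div_le_div_of_nonneg_left (Real.rpow_nonneg hw0.le _)
          (div_pos (pow_pos hR 2) two_pos) hge
      refine h1.trans_eq ?_
      rw [div_div_eq_mul_div]
      ring
    have hk := key_lemma p (2*s-1-p) cm⁻¹ (2/R^2) v0 v V _ hv0' hvv hp1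
      (by linarith) (inv_nonneg.mpr hcm.le) (by positivity) hV hfc hfg hfh
    have e1 : cm⁻¹ * V ^ (2*s-1-p+1) / (2*s-1-p+1)
        = K1 * R ^ ((p - 2*s)/(s - 1/2)) := by
      rw [show (2*s-1-p+1:ℝ) = 2*s-p by ring, hVe,
        show -(2*(2*s-p))/(2*s-1) = (p-2*s)/(s-1/2) by
          rw [div_eq_div_iff h2s1.ne' hs12.ne']; ring, hK1]
      ring
    have hRneg2 : (2:ℝ)/R^2 = 2 * R ^ ((-2:ℝ)) := by
      rw [show ((-2:ℝ)) = -(2:ℝ) by norm_num, Real.rpow_neg hR.le, hR2]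
      ring
    have e2 : (2/R^2) * V ^ (1-p) / (p-1) = K2 * R ^ ((p - 2*s)/(s - 1/2)) := by
      rw [hVe, hRneg2]
      have h2 : R ^ ((-2:ℝ)) * R ^ (-(2*(1-p))/(2*s-1))
          = R ^ ((p - 2*s)/(s - 1/2)) := by
        rw [← Real.rpow_add hR]
        congr 1
        rw [show (p-2*s)/(s-1/2) = (2*p-4*s)/(2*s-1) by
            rw [div_eq_div_iff hs12.ne' h2s1.ne']; ring,
          eq_div_iff h2s1.ne', add_mul, div_mul_cancel₀ _ h2s1.ne']
        ring
      calc 2 * R ^ ((-2:ℝ)) * ((2*cp) ^ ((1-p)/(2*s-1)) * R ^ (-(2*(1-p))/(2*s-1))) / (p-1)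
          = (2 * (2*cp) ^ ((1-p)/(2*s-1)) / (p-1))
            * (R ^ ((-2:ℝ)) * R ^ (-(2*(1-p))/(2*s-1))) := by ring
        _ = K2 * R ^ ((p - 2*s)/(s - 1/2)) := by rw [h2, hK2]
    rw [e1, e2] at hk
    refine hk.trans ?_
    calc K1 * R ^ ((p - 2*s)/(s - 1/2)) + K2 * R ^ ((p - 2*s)/(s - 1/2))
        = (K1 + K2) * R ^ ((p - 2*s)/(s - 1/2)) := by ring
      _ ≤ (1 + |K1| + |K2| + |K3| + |K4|) * R ^ ((p - 2*s)/(s - 1/2)) :=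
          mul_le_mul_of_nonneg_right habs hRα2
  · -- second integral
    intro hp'
    have hq1 : (0:ℝ) < (s - 1/2 - p) + 1 := by linarith
    have hRα1 : 0 ≤ R ^ (-((1 - 2*p + 2*s)/(2*s-1))) := Real.rpow_nonneg hR.le _
    have hfc : IntervalIntegrable (fun w => w ^ (-p) / r (u, w)) volume v0 v := by
      apply ContinuousOn.intervalIntegrable
      rw [Set.uIcc_of_le hvv]
      apply ContinuousOn.div
      · exact continuousOn_id.rpow_const
          (fun x hx => Or.inl (by simp only [id_eq]; exact ne_of_gt (by linarith [hx.1])))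
      · exact (hr.comp (Continuous.prodMk_right u)).continuousOn
      · intro x hx
        exact ne_of_gt (hyp u x huu0 hu0' hx.1).1
    have hfg : ∀ w ∈ Set.Icc v0 v,
        w ^ (-p) / r (u, w) ≤ (Real.sqrt cm)⁻¹ * w ^ (s - 1/2 - p) := by
      intro w hw
      obtain ⟨hrw, hlow, _⟩ := hyp u w huu0 hu0' hw.1
      have hw0 : (0:ℝ) < w := by linarith [hw.1]
      have hwp : 0 < w ^ (1-2*s) := Real.rpow_pos_of_pos hw0 _
      have habsu : 0 ≤ 2 * |u| := by positivity
      have hsq : Real.sqrt cm * w ^ ((1-2*s)/2) ≤ r (u, w) := by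
        have h3 : Real.sqrt (cm * w ^ (1-2*s)) ≤ r (u, w) := by
          rw [show r (u, w) = Real.sqrt (r (u, w)^2) from (Real.sqrt_sq hrw.le).symm]
          exact Real.sqrt_le_sqrt (by linarith)
        rwa [Real.sqrt_mul hcm.le, Real.sqrt_eq_rpow (w ^ (1-2*s)),
          ← Real.rpow_mul hw0.le,
          show (1-2*s)*(1/2) = (1-2*s)/2 by ring] at h3
      have hden : 0 < Real.sqrt cm * w ^ ((1-2*s)/2) :=
        mul_pos (Real.sqrt_pos.mpr hcm) (Real.rpow_pos_of_pos hw0 _)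
      have h1 : w ^ (-p) / r (u, w) ≤ w ^ (-p) / (Real.sqrt cm * w ^ ((1-2*s)/2)) :=
        div_le_div_of_nonneg_left (Real.rpow_nonneg hw0.le _) hden hsq
      refine h1.trans_eq ?_
      have e : w ^ (s - 1/2 - p) = w ^ (-p) / w ^ ((1-2*s)/2) := by
        rw [← Real.rpow_sub hw0]
        congr 1
        ring
      rw [e, div_mul_eq_div_div_swap]
      exact div_eq_inv_mul _ _
    have hfh : V < v → ∀ w ∈ Set.Icc v0 v,
        w ^ (-p) / r (u, w) ≤ (Real.sqrt 2 / R) * w ^ (-p) := by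
      intro hVv w hw
      obtain ⟨hrw, hlow, _⟩ := hyp u w huu0 hu0' hw.1
      have h0 := hcase hVv
      have hw0 : (0:ℝ) < w := by linarith [hw.1]
      have hwp : 0 < cm * w ^ (1-2*s) := mul_pos hcm (Real.rpow_pos_of_pos hw0 _)
      have hge : R^2/2 ≤ r (u, w)^2 := by linarith
      have hsq : R / Real.sqrt 2 ≤ r (u, w) := by
        have h3 : Real.sqrt (R^2/2) ≤ r (u, w) := by
          rw [show r (u, w) = Real.sqrt (r (u, w)^2) from (Real.sqrt_sq hrw.le).symm]
          exact Real.sqrt_le_sqrt hge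
        rwa [Real.sqrt_div' (R^2) (by norm_num), Real.sqrt_sq hR.le] at h3
      have hs2 : (0:ℝ) < Real.sqrt 2 := by positivity
      have h1 : w ^ (-p) / r (u, w) ≤ w ^ (-p) / (R / Real.sqrt 2) :=
        div_le_div_of_nonneg_left (Real.rpow_nonneg hw0.le _)
          (div_pos hR hs2) hsq
      refine h1.trans_eq ?_
      rw [div_div_eq_mul_div]
      ring
    have hk := key_lemma p (s - 1/2 - p) (Real.sqrt cm)⁻¹ (Real.sqrt 2 / R) v0 v V _
      hv0' hvv hp1 hq1 (inv_nonneg.mpr (Real.sqrt_nonneg cm)) (by positivity) hV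
      hfc hfg hfh
    have e1 : (Real.sqrt cm)⁻¹ * V ^ (s - 1/2 - p + 1) / (s - 1/2 - p + 1)
        = K3 * R ^ (-((1 - 2*p + 2*s)/(2*s-1))) := by
      rw [show (s - 1/2 - p + 1:ℝ) = s + 1/2 - p by ring, hVe,
        show -(2*(s + 1/2 - p))/(2*s-1) = -((1 - 2*p + 2*s)/(2*s-1)) by
          rw [neg_div, neg_inj, div_eq_div_iff h2s1.ne' h2s1.ne']; ring, hK3]
      ring
    have hRneg1 : Real.sqrt 2 / R = Real.sqrt 2 * R ^ ((-1:ℝ)) := by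
      rw [Real.rpow_neg_one]
      ring
    have e2 : (Real.sqrt 2 / R) * V ^ (1-p) / (p-1)
        = K4 * R ^ (-((1 - 2*p + 2*s)/(2*s-1))) := by
      rw [hVe, hRneg1]
      have h2 : R ^ ((-1:ℝ)) * R ^ (-(2*(1-p))/(2*s-1))
          = R ^ (-((1 - 2*p + 2*s)/(2*s-1))) := by
        rw [← Real.rpow_add hR]
        congr 1
        rw [show -((1-2*p+2*s)/(2*s-1)) = (2*p-2*s-1)/(2*s-1) by
            rw [← neg_div]; congr 1; ring,
          eq_div_iff h2s1.ne', add_mul, div_mul_cancel₀ _ h2s1.ne']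
        ring
      calc Real.sqrt 2 * R ^ ((-1:ℝ))
            * ((2*cp) ^ ((1-p)/(2*s-1)) * R ^ (-(2*(1-p))/(2*s-1))) / (p-1)
          = (Real.sqrt 2 * (2*cp) ^ ((1-p)/(2*s-1)) / (p-1))
            * (R ^ ((-1:ℝ)) * R ^ (-(2*(1-p))/(2*s-1))) := by ring
        _ = K4 * R ^ (-((1 - 2*p + 2*s)/(2*s-1))) := by rw [h2, hK4]
    rw [e1, e2] at hk
    refine hk.trans ?_
    have habs' : K3 + K4 ≤ 1 + |K1| + |K2| + |K3| + |K4| := by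
      have := le_abs_self K3; have := le_abs_self K4
      have := abs_nonneg K1; have := abs_nonneg K2
      linarith
    calc K3 * R ^ (-((1 - 2*p + 2*s)/(2*s-1))) + K4 * R ^ (-((1 - 2*p + 2*s)/(2*s-1)))
        = (K3 + K4) * R ^ (-((1 - 2*p + 2*s)/(2*s-1))) := by ring
      _ ≤ (1 + |K1| + |K2| + |K3| + |K4|) * R ^ (-((1 - 2*p + 2*s)/(2*s-1))) :=
          mul_le_mul_of_nonneg_right habs' hRα1

end
end
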